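/- arXiv:2512.10204 — 4 statements merged into one kernel-verified Lean document; each statement's English description precedes it below -/
import Mathlib

section
/- Let X be a real Banach space, let Ψ : X → ℝ be locally Lipschitz continuous, and let α ≥ 0. Then the following two conditions are equivalent: (i) Ψ⁰(v₁; v₂ − v₁) + Ψ⁰(v₂; v₁ − v₂) ≤ α‖v₁ − v₂‖² for all v₁, v₂ ∈ X; (ii) ⟨ξ₁ − ξ₂, v₁ − v₂⟩ ≥ −α‖v₁ − v₂‖² for all v₁, v₂ ∈ X and all ξ₁ ∈ ∂Ψ(v₁), ξ₂ ∈ ∂Ψ(v₂) (the relaxed monotonicity condition). -/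
open Filter Topology

/-- The Clarke (generalized) directional derivative of `f` at `u` in direction `v`. -/
noncomputable def clarkeDeriv {X : Type*} [NormedAddCommGroup X] [NormedSpace ℝ X]
    (f : X → ℝ) (u v : X) : ℝ :=
  Filter.limsup (fun p : X × ℝ => (f (p.1 + p.2 • v) - f p.1) / p.2)
    ((𝓝 u) ×ˢ 𝓝[>] (0:ℝ))

/-- The Clarke subdifferential of `f` at `u`, as a subset of the topological dual. -/
def clarkeSubdiff {X : Type*} [NormedAddCommGroup X] [NormedSpace ℝ X]
    (f : X → ℝ) (u : X) : Set (X →L[ℝ] ℝ) :=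
  {ξ | ∀ v : X, ξ v ≤ clarkeDeriv f u v}

set_option linter.unusedSectionVars false
section
variable {X : Type*} [NormedAddCommGroup X] [NormedSpace ℝ X] {Ψ : X → ℝ}

/-- The difference quotient. -/
noncomputable def cdq (Ψ : X → ℝ) (v : X) : X × ℝ → ℝ := fun p => (Ψ (p.1 + p.2 • v) - Ψ p.1) / p.2

lemma clarkeDeriv_eq (u v : X) :
    clarkeDeriv Ψ u v = Filter.limsup (cdq Ψ v) ((𝓝 u) ×ˢ 𝓝[>] (0:ℝ)) := rfl

lemma cd_bound (hΨlip : ∀ u : X, ∃ (L : NNReal) (s : Set X), s ∈ 𝓝 u ∧ LipschitzOnWith L Ψ s)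
    (u : X) :
    ∃ L : NNReal, ∀ v : X, ∀ᶠ p in (𝓝 u) ×ˢ 𝓝[>] (0:ℝ), |cdq Ψ v p| ≤ L * ‖v‖ := by
  obtain ⟨L, s, hs, hlip⟩ := hΨlip u
  obtain ⟨ε, εpos, hball⟩ := Metric.mem_nhds_iff.1 hs
  refine ⟨L, fun v => ?_⟩
  have hδ : (0:ℝ) < ε / (2 * (‖v‖ + 1)) := by positivity
  filter_upwards [prod_mem_prod (Metric.ball_mem_nhds u (half_pos εpos))
    (Ioo_mem_nhdsGT_of_mem ⟨le_refl _, hδ⟩)] with p hp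
  obtain ⟨hw, hl⟩ := hp
  have hl0 : (0:ℝ) < p.2 := hl.1
  have h1 : p.1 ∈ s := hball (Metric.mem_ball.2 (lt_of_lt_of_le hw (half_le_self εpos.le)))
  have hnorm : ‖p.2 • v‖ < ε / 2 := by
    rw [norm_smul, Real.norm_eq_abs, abs_of_pos hl0]
    calc p.2 * ‖v‖ ≤ p.2 * (‖v‖ + 1) := by nlinarith [hl0]
      _ < ε / (2 * (‖v‖ + 1)) * (‖v‖ + 1) := by
          have : (0:ℝ) < ‖v‖ + 1 := by positivity
          exact mul_lt_mul_of_pos_right hl.2 this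
      _ = ε / 2 := by field_simp
  have h2 : p.1 + p.2 • v ∈ s := by
    apply hball
    rw [Metric.mem_ball]
    calc dist (p.1 + p.2 • v) u ≤ dist (p.1 + p.2 • v) p.1 + dist p.1 u := dist_triangle _ _ _
      _ < ε / 2 + ε / 2 := by
          rw [dist_eq_norm, add_sub_cancel_left]
          exact add_lt_add hnorm hw
      _ = ε := by ring
  have hd := hlip.dist_le_mul _ h2 _ h1
  rw [Real.dist_eq, dist_eq_norm, add_sub_cancel_left, norm_smul, Real.norm_eq_abs,
    abs_of_pos hl0] at hd
  rw [cdq, abs_div, abs_of_pos hl0, div_le_iff₀ hl0]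
  calc |Ψ (p.1 + p.2 • v) - Ψ p.1| ≤ L * (p.2 * ‖v‖) := hd
    _ = L * ‖v‖ * p.2 := by ring

lemma ev_bddAbove {F : Filter (X × ℝ)} {g : X × ℝ → ℝ} {c : ℝ}
    (h : ∀ᶠ p in F, |g p| ≤ c) : F.IsBoundedUnder (· ≤ ·) g :=
  ⟨c, eventually_map.2 (h.mono fun _ hp => (abs_le.1 hp).2)⟩

lemma ev_bddBelow {F : Filter (X × ℝ)} {g : X × ℝ → ℝ} {c : ℝ}
    (h : ∀ᶠ p in F, |g p| ≤ c) : F.IsBoundedUnder (· ≥ ·) g :=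
  ⟨-c, eventually_map.2 (h.mono fun _ hp => (abs_le.1 hp).1)⟩

lemma clarkeDeriv_le_bound {u v : X} {c : ℝ}
    (h : ∀ᶠ p in (𝓝 u) ×ˢ 𝓝[>] (0:ℝ), |cdq Ψ v p| ≤ c) :
    clarkeDeriv Ψ u v ≤ c := by
  rw [clarkeDeriv_eq]
  exact limsup_le_of_le ((ev_bddBelow h).isCoboundedUnder_le)
    (h.mono fun _ hp => (abs_le.1 hp).2)

lemma bound_le_clarkeDeriv {u v : X} {c : ℝ}
    (h : ∀ᶠ p in (𝓝 u) ×ˢ 𝓝[>] (0:ℝ), |cdq Ψ v p| ≤ c) :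
    -c ≤ clarkeDeriv Ψ u v := by
  rw [clarkeDeriv_eq]
  exact le_limsup_of_frequently_le
    ((h.mono fun _ hp => (abs_le.1 hp).1).frequently) (ev_bddAbove h)

end

section
variable {X : Type*} [NormedAddCommGroup X] [NormedSpace ℝ X] {Ψ : X → ℝ}

lemma limsup_comp_le {F : Filter (X × ℝ)} {m : X × ℝ → X × ℝ} (hm : Tendsto m F F)
    (g : X × ℝ → ℝ) {c : ℝ} (hb : ∀ᶠ p in F, |g p| ≤ c) [F.NeBot] :
    Filter.limsup (g ∘ m) F ≤ Filter.limsup g F := by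
  have h1 : Filter.limsup (g ∘ m) F = Filter.limsup g (Filter.map m F) := by
    rw [Filter.limsup, Filter.limsup, Filter.map_map]
  rw [h1]
  refine limsup_le_limsup_of_le hm ?_ (ev_bddAbove hb)
  have : ∀ᶠ p in Filter.map m F, |g p| ≤ c := hm.eventually hb
  exact (ev_bddBelow this).isCoboundedUnder_le

lemma tendsto_shift (u v : X) :
    Tendsto (fun p : X × ℝ => (p.1 + p.2 • v, p.2)) ((𝓝 u) ×ˢ 𝓝[>] (0:ℝ))
      ((𝓝 u) ×ˢ 𝓝[>] (0:ℝ)) := by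
  refine Tendsto.prodMk ?_ tendsto_snd
  have h2 : Tendsto (fun p : X × ℝ => p.2) ((𝓝 u) ×ˢ 𝓝[>] (0:ℝ)) (𝓝 (0:ℝ)) :=
    tendsto_snd.mono_right nhdsWithin_le_nhds
  have := tendsto_fst.add (h2.smul_const v)
  simpa using this

lemma cd_subadd (hΨlip : ∀ u : X, ∃ (L : NNReal) (s : Set X), s ∈ 𝓝 u ∧ LipschitzOnWith L Ψ s)
    (u v w : X) :
    clarkeDeriv Ψ u (v + w) ≤ clarkeDeriv Ψ u v + clarkeDeriv Ψ u w := by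
  obtain ⟨L, hb⟩ := cd_bound hΨlip u
  set F := (𝓝 u) ×ˢ 𝓝[>] (0:ℝ) with hF
  set m : X × ℝ → X × ℝ := fun p => (p.1 + p.2 • v, p.2) with hm
  have hmt : Tendsto m F F := tendsto_shift u v
  have hkey : cdq Ψ (v + w) = (cdq Ψ w ∘ m) + cdq Ψ v := by
    funext p
    simp only [cdq, Pi.add_apply, Function.comp_apply, hm, smul_add]
    rw [← add_div, sub_add_sub_cancel, add_assoc]
  have hbw : ∀ᶠ p in F, |(cdq Ψ w ∘ m) p| ≤ L * ‖w‖ := hmt.eventually (hb w)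
  rw [clarkeDeriv_eq, hkey]
  calc Filter.limsup (cdq Ψ w ∘ m + cdq Ψ v) F
      ≤ Filter.limsup (cdq Ψ w ∘ m) F + Filter.limsup (cdq Ψ v) F :=
        limsup_add_le (ev_bddBelow hbw) (ev_bddAbove hbw)
          ((ev_bddBelow (hb v)).isCoboundedUnder_le) (ev_bddAbove (hb v))
    _ ≤ Filter.limsup (cdq Ψ w) F + Filter.limsup (cdq Ψ v) F := by
        exact add_le_add_left (limsup_comp_le hmt (cdq Ψ w) (hb w)) _
    _ = clarkeDeriv Ψ u v + clarkeDeriv Ψ u w := by rw [clarkeDeriv_eq, clarkeDeriv_eq]; ring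

lemma cd_zero (u : X) : clarkeDeriv Ψ u 0 = 0 := by
  rw [clarkeDeriv_eq]
  have : cdq Ψ (0:X) = fun _ => (0:ℝ) := by
    funext p; simp [cdq]
  rw [this]
  exact limsup_const 0

lemma tendsto_scale (u : X) {c : ℝ} (hc : 0 < c) :
    Tendsto (fun p : X × ℝ => (p.1, c * p.2)) ((𝓝 u) ×ˢ 𝓝[>] (0:ℝ))
      ((𝓝 u) ×ˢ 𝓝[>] (0:ℝ)) := by
  refine Tendsto.prodMk tendsto_fst ?_
  rw [tendsto_nhdsWithin_iff]
  constructor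
  · have h2 : Tendsto (fun p : X × ℝ => p.2) ((𝓝 u) ×ˢ 𝓝[>] (0:ℝ)) (𝓝 (0:ℝ)) :=
      tendsto_snd.mono_right nhdsWithin_le_nhds
    simpa using h2.const_mul c
  · filter_upwards [prod_mem_prod (univ_mem : Set.univ ∈ 𝓝 u)
      (self_mem_nhdsWithin : Set.Ioi (0:ℝ) ∈ 𝓝[>] (0:ℝ))] with p hp
    exact mul_pos hc hp.2

lemma cd_smul_le (hΨlip : ∀ u : X, ∃ (L : NNReal) (s : Set X), s ∈ 𝓝 u ∧ LipschitzOnWith L Ψ s)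
    (u v : X) {c : ℝ} (hc : 0 < c) :
    clarkeDeriv Ψ u (c • v) ≤ c * clarkeDeriv Ψ u v := by
  obtain ⟨L, hb⟩ := cd_bound hΨlip u
  set F := (𝓝 u) ×ˢ 𝓝[>] (0:ℝ) with hF
  set m : X × ℝ → X × ℝ := fun p => (p.1, c * p.2) with hm
  have hmt : Tendsto m F F := tendsto_scale u hc
  have hkey : cdq Ψ (c • v) = (fun x => c * x) ∘ (cdq Ψ v ∘ m) := by
    funext p
    simp only [cdq, Function.comp_apply, hm, smul_smul]
    rw [mul_comm p.2 c, mul_div_assoc', mul_div_mul_left _ _ hc.ne']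
  have hbw : ∀ᶠ p in F, |(cdq Ψ v ∘ m) p| ≤ L * ‖v‖ := hmt.eventually (hb v)
  rw [clarkeDeriv_eq, hkey]
  have hmono : Monotone (fun x : ℝ => c * x) := fun _ _ h => mul_le_mul_of_nonneg_left h hc.le
  rw [← hmono.map_limsup_of_continuousAt (cdq Ψ v ∘ m)
    ((continuous_const.mul continuous_id).continuousAt) (ev_bddAbove hbw)
    ((ev_bddBelow hbw).isCoboundedUnder_le)]
  rw [clarkeDeriv_eq]
  exact mul_le_mul_of_nonneg_left (limsup_comp_le hmt (cdq Ψ v) (hb v)) hc.le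

lemma cd_smul (hΨlip : ∀ u : X, ∃ (L : NNReal) (s : Set X), s ∈ 𝓝 u ∧ LipschitzOnWith L Ψ s)
    (u v : X) {c : ℝ} (hc : 0 < c) :
    clarkeDeriv Ψ u (c • v) = c * clarkeDeriv Ψ u v := by
  refine le_antisymm (cd_smul_le hΨlip u v hc) ?_
  have h := cd_smul_le hΨlip u (c • v) (inv_pos.2 hc)
  rw [inv_smul_smul₀ hc.ne'] at h
  calc c * clarkeDeriv Ψ u v ≤ c * (c⁻¹ * clarkeDeriv Ψ u (c • v)) :=
        mul_le_mul_of_nonneg_left h hc.le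
    _ = clarkeDeriv Ψ u (c • v) := by field_simp

lemma exists_max_subdiff
    (hΨlip : ∀ u : X, ∃ (L : NNReal) (s : Set X), s ∈ 𝓝 u ∧ LipschitzOnWith L Ψ s)
    (u v : X) (hv : v ≠ 0) :
    ∃ ξ ∈ clarkeSubdiff Ψ u, ξ v = clarkeDeriv Ψ u v := by
  obtain ⟨L, hb⟩ := cd_bound hΨlip u
  set N : X → ℝ := clarkeDeriv Ψ u with hN
  have N_hom : ∀ c : ℝ, 0 < c → ∀ x, N (c • x) = c * N x := fun c hc x => cd_smul hΨlip u x hc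
  have N_add : ∀ x y, N (x + y) ≤ N x + N y := cd_subadd hΨlip u
  have N_le : ∀ x, N x ≤ L * ‖x‖ := fun x => clarkeDeriv_le_bound (hb x)
  have N_pair : ∀ x, 0 ≤ N x + N (-x) := fun x => by
    have h1 := N_add x (-x)
    rw [add_neg_cancel] at h1
    have h0 : N (0:X) = 0 := cd_zero u
    linarith [h0 ▸ h1]
  set f : X →ₗ.[ℝ] ℝ := LinearPMap.mkSpanSingleton v (N v) hv with hf
  have hfdom : f.domain = Submodule.span ℝ {v} := rfl
  have hfle : ∀ x : f.domain, f x ≤ N x := by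
    rintro ⟨x, hx⟩
    obtain ⟨t, rfl⟩ := Submodule.mem_span_singleton.1 hx
    have happ : f ⟨t • v, hx⟩ = t • N v := LinearPMap.mkSpanSingleton'_apply v (N v) _ t hx
    rw [happ, smul_eq_mul]
    rcases lt_trichotomy t 0 with ht | ht | ht
    · have : N (t • v) = (-t) * N (-v) := by
        rw [show t • v = (-t) • (-v) by rw [neg_smul_neg], N_hom (-t) (by linarith) (-v)]
      rw [this]
      nlinarith [N_pair v]
    · subst ht
      simp only [zero_smul, zero_mul]
      rw [show N (0:X) = 0 from cd_zero u]
    · rw [N_hom t ht v]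
  obtain ⟨g, hg_eq, hg_le⟩ := exists_extension_of_le_sublinear f N N_hom N_add hfle
  have hgv : g v = N v := by
    have h1 := hg_eq ⟨v, Submodule.mem_span_singleton_self v⟩
    rw [LinearPMap.mkSpanSingleton_apply] at h1
    exact h1
  have hgbound : ∀ x : X, ‖g x‖ ≤ L * ‖x‖ := by
    intro x
    rw [Real.norm_eq_abs, abs_le]
    constructor
    · have h1 : g (-x) ≤ N (-x) := hg_le (-x)
      have h2 : N (-x) ≤ L * ‖-x‖ := N_le (-x)
      rw [norm_neg] at h2
      rw [map_neg] at h1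
      linarith
    · exact (hg_le x).trans (N_le x)
  refine ⟨g.mkContinuous L hgbound, fun w => ?_, ?_⟩
  · exact hg_le w
  · exact hgv

end

theorem stmt4 {X : Type*} [NormedAddCommGroup X] [NormedSpace ℝ X] [CompleteSpace X]
    (Ψ : X → ℝ)
    (hΨlip : ∀ u : X, ∃ (L : NNReal) (s : Set X), s ∈ 𝓝 u ∧ LipschitzOnWith L Ψ s)
    (α : ℝ) (hα : 0 ≤ α) :
    (∀ v₁ v₂ : X,
        clarkeDeriv Ψ v₁ (v₂ - v₁) + clarkeDeriv Ψ v₂ (v₁ - v₂) ≤ α * ‖v₁ - v₂‖ ^ 2) ↔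
    (∀ v₁ v₂ : X, ∀ ξ₁ ∈ clarkeSubdiff Ψ v₁, ∀ ξ₂ ∈ clarkeSubdiff Ψ v₂,
        (ξ₁ - ξ₂) (v₁ - v₂) ≥ -α * ‖v₁ - v₂‖ ^ 2) := by
  constructor
  · intro h v₁ v₂ ξ₁ hξ₁ ξ₂ hξ₂
    have h1 : ξ₁ (v₂ - v₁) ≤ clarkeDeriv Ψ v₁ (v₂ - v₁) := hξ₁ (v₂ - v₁)
    have h2 : ξ₂ (v₁ - v₂) ≤ clarkeDeriv Ψ v₂ (v₁ - v₂) := hξ₂ (v₁ - v₂)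
    have h3 : (ξ₁ - ξ₂) (v₁ - v₂) = -(ξ₁ (v₂ - v₁)) - ξ₂ (v₁ - v₂) := by
      rw [ContinuousLinearMap.sub_apply, show v₁ - v₂ = -(v₂ - v₁) by abel, map_neg]
    rw [h3]
    have := h v₁ v₂
    linarith
  · intro h v₁ v₂
    by_cases hv : v₁ = v₂
    · subst hv
      simp [cd_zero, sub_self] -- check: clarkeDeriv Ψ v₁ 0 = 0
    · have hv1 : v₂ - v₁ ≠ 0 := sub_ne_zero.2 (Ne.symm hv)
      have hv2 : v₁ - v₂ ≠ 0 := sub_ne_zero.2 hv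
      obtain ⟨ξ₁, hξ₁, hξ₁v⟩ := exists_max_subdiff hΨlip v₁ (v₂ - v₁) hv1
      obtain ⟨ξ₂, hξ₂, hξ₂v⟩ := exists_max_subdiff hΨlip v₂ (v₁ - v₂) hv2
      have hmain := h v₁ v₂ ξ₁ hξ₁ ξ₂ hξ₂
      have h3 : (ξ₁ - ξ₂) (v₁ - v₂) = -(ξ₁ (v₂ - v₁)) - ξ₂ (v₁ - v₂) := by
        rw [ContinuousLinearMap.sub_apply, show v₁ - v₂ = -(v₂ - v₁) by abel, map_neg]
      rw [h3, hξ₁v, hξ₂v] at hmain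
      linarith
end

section
/- Let V be a real Hilbert space, let Ψ : V → ℝ be locally Lipschitz continuous, and let α ≥ 0. Then the condition Ψ⁰(v₁; v₂ − v₁) + Ψ⁰(v₂; v₁ − v₂) ≤ α‖v₁ − v₂‖² for all v₁, v₂ ∈ V holds if and only if the functional v ↦ Ψ(v) + (α/2)‖v‖² is convex on V. -/
open Filter Topology Set

namespace ClarkeAux

open scoped RealInnerProductSpace

lemma limsup_map' {α β : Type*} (u : α → ℝ) (m : β → α) (l : Filter β) :
    Filter.limsup u (Filter.map m l) = Filter.limsup (fun x => u (m x)) l := by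
  unfold Filter.limsup
  rw [Filter.map_map]
  rfl

variable {V : Type*} [NormedAddCommGroup V] [InnerProductSpace ℝ V] {Ψ : V → ℝ}

/-- The slope function appearing in the Clarke derivative. -/
noncomputable def slf (Ψ : V → ℝ) (v : V) : V × ℝ → ℝ :=
  fun p => (Ψ (p.1 + p.2 • v) - Ψ p.1) / p.2

lemma clarke_eq (Ψ : V → ℝ) (u v : V) :
    clarkeDeriv Ψ u v = Filter.limsup (slf Ψ v) ((𝓝 u) ×ˢ 𝓝[>] (0:ℝ)) := rfl

lemma psi_cont (hΨlip : ∀ u : V, ∃ (L : NNReal) (s : Set V), s ∈ 𝓝 u ∧ LipschitzOnWith L Ψ s) :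
    Continuous Ψ := by
  rw [continuous_iff_continuousAt]
  intro u
  obtain ⟨L, s, hs, hL⟩ := hΨlip u
  exact hL.continuousOn.continuousAt hs

instance FneBot (u : V) : ((𝓝 u) ×ˢ 𝓝[>] (0:ℝ)).NeBot :=
  Filter.prod_neBot.mpr ⟨by infer_instance, by infer_instance⟩

lemma ev_bdd (hΨlip : ∀ u : V, ∃ (L : NNReal) (s : Set V), s ∈ 𝓝 u ∧ LipschitzOnWith L Ψ s)
    (u v : V) :
    ∃ C : ℝ, 0 ≤ C ∧ ∀ᶠ p in (𝓝 u) ×ˢ 𝓝[>] (0:ℝ), |slf Ψ v p| ≤ C := by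
  obtain ⟨L, s, hs, hL⟩ := hΨlip u
  obtain ⟨ε, hε, hball⟩ := Metric.mem_nhds_iff.mp hs
  refine ⟨L * ‖v‖, by positivity, ?_⟩
  have h1 : Metric.ball u (ε/2) ∈ 𝓝 u := Metric.ball_mem_nhds u (by linarith)
  have h2 : Ioo (0:ℝ) (ε/(2*(‖v‖+1))) ∈ 𝓝[>] (0:ℝ) :=
    Ioo_mem_nhdsGT_of_mem ⟨le_refl _, by positivity⟩
  filter_upwards [Filter.prod_mem_prod h1 h2] with p hp
  obtain ⟨hw, hl⟩ := hp
  rw [Metric.mem_ball, dist_eq_norm] at hw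
  obtain ⟨hl0, hl1⟩ := hl
  have hvnn : (0:ℝ) ≤ ‖v‖ := norm_nonneg v
  have hsv : ‖p.2 • v‖ = p.2 * ‖v‖ := by
    rw [norm_smul, Real.norm_eq_abs, abs_of_pos hl0]
  have hmem1 : p.1 ∈ s := by
    apply hball
    rw [Metric.mem_ball, dist_eq_norm]
    linarith
  have hmem2 : p.1 + p.2 • v ∈ s := by
    apply hball
    rw [Metric.mem_ball, dist_eq_norm]
    have : ‖p.1 + p.2 • v - u‖ ≤ ‖p.1 - u‖ + ‖p.2 • v‖ := by
      have e : p.1 + p.2 • v - u = (p.1 - u) + p.2 • v := by abel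
      rw [e]
      exact norm_add_le _ _
    have hb2 : p.2 * ‖v‖ < ε/2 := by
      have h3 : p.2 * ‖v‖ ≤ p.2 * (‖v‖ + 1) := by nlinarith
      have h4 : p.2 * (‖v‖+1) < (ε/(2*(‖v‖+1))) * (‖v‖+1) := by
        apply mul_lt_mul_of_pos_right hl1; positivity
      have h5 : (ε/(2*(‖v‖+1))) * (‖v‖+1) = ε/2 := by field_simp
      linarith
    rw [hsv] at this
    linarith
  have hd := hL.dist_le_mul _ hmem2 _ hmem1
  rw [Real.dist_eq, dist_eq_norm] at hd
  have he : p.1 + p.2 • v - p.1 = p.2 • v := by abel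
  rw [he, hsv] at hd
  have : |slf Ψ v p| = |Ψ (p.1 + p.2 • v) - Ψ p.1| / p.2 := by
    rw [slf, abs_div, abs_of_pos hl0]
  rw [this, div_le_iff₀ hl0]
  calc |Ψ (p.1 + p.2 • v) - Ψ p.1| ≤ L * (p.2 * ‖v‖) := hd
    _ = L * ‖v‖ * p.2 := by ring

lemma limsup_comp_le
    (hΨlip : ∀ u : V, ∃ (L : NNReal) (s : Set V), s ∈ 𝓝 u ∧ LipschitzOnWith L Ψ s)
    (u v : V) {m : ℝ → V × ℝ}
    (hm : Tendsto m (𝓝[>] (0:ℝ)) ((𝓝 u) ×ˢ 𝓝[>] (0:ℝ))) :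
    Filter.limsup (fun t => slf Ψ v (m t)) (𝓝[>] (0:ℝ)) ≤ clarkeDeriv Ψ u v := by
  obtain ⟨C, hC0, hC⟩ := ev_bdd hΨlip u v
  rw [← limsup_map' (slf Ψ v) m (𝓝[>] (0:ℝ)), clarke_eq]
  haveI : (Filter.map m (𝓝[>] (0:ℝ))).NeBot := Filter.map_neBot
  refine Filter.limsup_le_limsup_of_le hm ?_ ?_
  · apply Filter.IsBoundedUnder.isCoboundedUnder_le
    refine ⟨-C, ?_⟩
    rw [Filter.eventually_map]
    filter_upwards [hm.eventually hC] with t ht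
    exact neg_le_of_abs_le ht
  · refine ⟨C, ?_⟩
    rw [Filter.eventually_map]
    filter_upwards [hC] with p hp
    exact le_of_abs_le hp

lemma tendsto_pair (u : V) :
    Tendsto (fun t : ℝ => ((u : V), t)) (𝓝[>] (0:ℝ)) ((𝓝 u) ×ˢ 𝓝[>] (0:ℝ)) :=
  Filter.Tendsto.prodMk tendsto_const_nhds tendsto_id

lemma tendsto_pair' (u v : V) :
    Tendsto (fun t : ℝ => (u + t • v, t)) (𝓝[>] (0:ℝ)) ((𝓝 u) ×ˢ 𝓝[>] (0:ℝ)) := by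
  refine Filter.Tendsto.prodMk ?_ tendsto_id
  have h : Tendsto (fun t : ℝ => u + t • v) (𝓝 (0:ℝ)) (𝓝 (u + (0:ℝ) • v)) := by
    apply Continuous.tendsto
    exact continuous_const.add (continuous_id.smul continuous_const)
  simpa using h.mono_left nhdsWithin_le_nhds

lemma dini_upper_le
    (hΨlip : ∀ u : V, ∃ (L : NNReal) (s : Set V), s ∈ 𝓝 u ∧ LipschitzOnWith L Ψ s) (u v : V) :
    Filter.limsup (fun t : ℝ => (Ψ (u + t • v) - Ψ u) / t) (𝓝[>] (0:ℝ))
      ≤ clarkeDeriv Ψ u v := by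
  have h := limsup_comp_le hΨlip u v (tendsto_pair u)
  simpa only [slf] using h

lemma dini_neg_le
    (hΨlip : ∀ u : V, ∃ (L : NNReal) (s : Set V), s ∈ 𝓝 u ∧ LipschitzOnWith L Ψ s) (u v : V) :
    Filter.limsup (fun t : ℝ => -((Ψ (u + t • v) - Ψ u) / t)) (𝓝[>] (0:ℝ))
      ≤ clarkeDeriv Ψ u (-v) := by
  have h := limsup_comp_le hΨlip u (-v) (tendsto_pair' u v)
  have he : (fun t : ℝ => slf Ψ (-v) (u + t • v, t))
      = fun t : ℝ => -((Ψ (u + t • v) - Ψ u) / t) := by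
    funext t
    have : u + t • v + t • (-v) = u := by module
    rw [slf]
    simp only [this]
    ring
  rwa [he] at h

lemma ev_slope_lt
    (hΨlip : ∀ u : V, ∃ (L : NNReal) (s : Set V), s ∈ 𝓝 u ∧ LipschitzOnWith L Ψ s)
    (u v : V) {r : ℝ} (h : clarkeDeriv Ψ u v < r) :
    ∀ᶠ t in 𝓝[>] (0:ℝ), (Ψ (u + t • v) - Ψ u) / t < r := by
  obtain ⟨C, hC0, hC⟩ := ev_bdd hΨlip u v
  have hb : Filter.IsBoundedUnder (· ≤ ·) (𝓝[>] (0:ℝ))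
      (fun t : ℝ => (Ψ (u + t • v) - Ψ u) / t) := by
    refine ⟨C, ?_⟩
    rw [Filter.eventually_map]
    filter_upwards [(tendsto_pair u).eventually hC] with t ht
    exact le_of_abs_le ht
  exact Filter.eventually_lt_of_limsup_lt (lt_of_le_of_lt (dini_upper_le hΨlip u v) h) hb

lemma ev_slope_gt
    (hΨlip : ∀ u : V, ∃ (L : NNReal) (s : Set V), s ∈ 𝓝 u ∧ LipschitzOnWith L Ψ s)
    (u v : V) {r : ℝ} (h : clarkeDeriv Ψ u (-v) < r) :
    ∀ᶠ t in 𝓝[>] (0:ℝ), -r < (Ψ (u + t • v) - Ψ u) / t := by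
  obtain ⟨C, hC0, hC⟩ := ev_bdd hΨlip u (-v)
  have hb : Filter.IsBoundedUnder (· ≤ ·) (𝓝[>] (0:ℝ))
      (fun t : ℝ => -((Ψ (u + t • v) - Ψ u) / t)) := by
    refine ⟨C, ?_⟩
    rw [Filter.eventually_map]
    filter_upwards [(tendsto_pair' u v).eventually hC] with t ht
    have he : slf Ψ (-v) (u + t • v, t) = -((Ψ (u + t • v) - Ψ u) / t) := by
      have h2 : u + t • v + t • (-v) = u := by module
      rw [slf]; simp only [h2]; ring
    rw [he] at ht
    exact le_of_abs_le ht
  have := Filter.eventually_lt_of_limsup_lt (lt_of_le_of_lt (dini_neg_le hΨlip u v) h) hb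
  filter_upwards [this] with t ht
  linarith

lemma zero_le_clarke_add
    (hΨlip : ∀ u : V, ∃ (L : NNReal) (s : Set V), s ∈ 𝓝 u ∧ LipschitzOnWith L Ψ s)
    (u v : V) :
    0 ≤ clarkeDeriv Ψ u v + clarkeDeriv Ψ u (-v) := by
  by_contra hlt
  push_neg at hlt
  set a := clarkeDeriv Ψ u v with ha
  set b := clarkeDeriv Ψ u (-v) with hb
  have hε : 0 < -(a+b)/2 := by linarith
  have h1 := ev_slope_lt hΨlip u v (r := a + (-(a+b)/2)) (by linarith)
  have h2 := ev_slope_gt hΨlip u v (r := b + (-(a+b)/2)) (by linarith)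
  obtain ⟨t, ht1, ht2⟩ := (h1.and h2).exists
  linarith

lemma clarke_smul
    (hΨlip : ∀ u : V, ∃ (L : NNReal) (s : Set V), s ∈ 𝓝 u ∧ LipschitzOnWith L Ψ s)
    (u v : V) {c : ℝ} (hc : 0 < c) :
    clarkeDeriv Ψ u (c • v) = c * clarkeDeriv Ψ u v := by
  have key : ∀ e : ℝ, 0 < e →
      Tendsto (fun t : ℝ => e * t) (𝓝[>] (0:ℝ)) (𝓝[>] (0:ℝ)) := by
    intro e he
    apply tendsto_nhdsWithin_of_tendsto_nhds_of_eventually_within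
    · have h : Tendsto (fun t : ℝ => e * t) (𝓝 (0:ℝ)) (𝓝 (e * 0)) :=
        (continuous_const.mul continuous_id).tendsto 0
      simpa using h.mono_left nhdsWithin_le_nhds
    · exact eventually_mem_nhdsWithin.mono fun t ht => mul_pos he ht
  have hmul : Filter.map (fun t : ℝ => c * t) (𝓝[>] (0:ℝ)) = 𝓝[>] (0:ℝ) := by
    apply le_antisymm (key c hc)
    conv_lhs => rw [show (𝓝[>] (0:ℝ))
      = Filter.map (fun t : ℝ => c * t) (Filter.map (fun t : ℝ => c⁻¹ * t) (𝓝[>] (0:ℝ))) from by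
        rw [Filter.map_map]
        have : ((fun t : ℝ => c * t) ∘ fun t : ℝ => c⁻¹ * t) = fun t : ℝ => t := by
          funext t; simp [← mul_assoc, mul_inv_cancel₀ hc.ne']
        rw [this, Filter.map_id']]
    exact Filter.map_mono (key c⁻¹ (inv_pos.mpr hc))
  set m : V × ℝ → V × ℝ := fun p => (p.1, c * p.2) with hmdef
  have hFmap : Filter.map m ((𝓝 u) ×ˢ 𝓝[>] (0:ℝ)) = (𝓝 u) ×ˢ 𝓝[>] (0:ℝ) := by
    have := Filter.prod_map_map_eq (f₁ := 𝓝 u) (f₂ := 𝓝[>] (0:ℝ))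
      (m₁ := fun x : V => x) (m₂ := fun t : ℝ => c * t)
    rw [Filter.map_id', hmul] at this
    exact this.symm
  have hmF : Tendsto m ((𝓝 u) ×ˢ 𝓝[>] (0:ℝ)) ((𝓝 u) ×ˢ 𝓝[>] (0:ℝ)) := le_of_eq hFmap
  obtain ⟨C, hC0, hC⟩ := ev_bdd hΨlip u v
  have hkey : slf Ψ (c • v) = fun p => c * slf Ψ v (m p) := by
    funext p
    rw [slf, slf]
    have h1 : p.2 • (c • v) = (c * p.2) • v := by rw [smul_smul, mul_comm]
    simp only [hmdef, h1]
    rcases eq_or_ne p.2 0 with h | h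
    · simp [h]
    · field_simp
  have hbdd1 : Filter.IsBoundedUnder (· ≤ ·) ((𝓝 u) ×ˢ 𝓝[>] (0:ℝ)) (fun p => slf Ψ v (m p)) :=
    ⟨C, Filter.eventually_map.mpr ((hmF.eventually hC).mono fun p hp => le_of_abs_le hp)⟩
  have hbdd2 : Filter.IsCoboundedUnder (· ≤ ·) ((𝓝 u) ×ˢ 𝓝[>] (0:ℝ))
      (fun p => slf Ψ v (m p)) :=
    Filter.IsBoundedUnder.isCoboundedUnder_le
      ⟨-C, Filter.eventually_map.mpr ((hmF.eventually hC).mono fun p hp => neg_le_of_abs_le hp)⟩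
  have hbdd3 : Filter.IsBoundedUnder (· ≤ ·) ((𝓝 u) ×ˢ 𝓝[>] (0:ℝ))
      (fun p => c * slf Ψ v (m p)) :=
    ⟨c * C, Filter.eventually_map.mpr ((hmF.eventually hC).mono fun p hp =>
      mul_le_mul_of_nonneg_left (le_of_abs_le hp) hc.le)⟩
  have hbdd4 : Filter.IsCoboundedUnder (· ≤ ·) ((𝓝 u) ×ˢ 𝓝[>] (0:ℝ))
      (fun p => c * slf Ψ v (m p)) :=
    Filter.IsBoundedUnder.isCoboundedUnder_le
      ⟨c * (-C), Filter.eventually_map.mpr ((hmF.eventually hC).mono fun p hp =>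
        mul_le_mul_of_nonneg_left (neg_le_of_abs_le hp) hc.le)⟩
  have hiso := (OrderIso.mulLeft₀ c hc).limsup_apply
    (f := (𝓝 u) ×ˢ 𝓝[>] (0:ℝ)) (u := fun p => slf Ψ v (m p)) hbdd1 hbdd2 hbdd3 hbdd4
  calc clarkeDeriv Ψ u (c • v)
      = Filter.limsup (fun p => c * slf Ψ v (m p)) ((𝓝 u) ×ˢ 𝓝[>] (0:ℝ)) := by
        rw [clarke_eq, hkey]
    _ = c * Filter.limsup (fun p => slf Ψ v (m p)) ((𝓝 u) ×ˢ 𝓝[>] (0:ℝ)) := by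
        have he2 : (fun p => c * slf Ψ v (m p))
            = fun p => (OrderIso.mulLeft₀ c hc) (slf Ψ v (m p)) := by
          funext p
          simp [OrderIso.mulLeft₀_apply]
        rw [he2, ← hiso, OrderIso.mulLeft₀_apply]
    _ = c * Filter.limsup (slf Ψ v) (Filter.map m ((𝓝 u) ×ˢ 𝓝[>] (0:ℝ))) := by
        rw [limsup_map']
    _ = c * clarkeDeriv Ψ u v := by rw [hFmap, clarke_eq]

lemma tendsto_sub_right (τ : ℝ) :
    Tendsto (fun z : ℝ => z - τ) (𝓝[>] τ) (𝓝[>] (0:ℝ)) := by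
  apply tendsto_nhdsWithin_of_tendsto_nhds_of_eventually_within
  · have h : Tendsto (fun z : ℝ => z - τ) (𝓝 τ) (𝓝 (τ - τ)) :=
      (continuous_id.sub continuous_const).tendsto τ
    simpa using h.mono_left nhdsWithin_le_nhds
  · exact eventually_mem_nhdsWithin.mono fun z hz => Set.mem_Ioi.mpr (sub_pos.mpr (Set.mem_Ioi.mp hz))

lemma slope_upper
    (hΨlip : ∀ u : V, ∃ (L : NNReal) (s : Set V), s ∈ 𝓝 u ∧ LipschitzOnWith L Ψ s)
    {x d : V} {K : ℝ}
    (hcond : ∀ s t : ℝ, s < t →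
      clarkeDeriv Ψ (x + s • d) d + clarkeDeriv Ψ (x + t • d) (-d) ≤ K * (t - s))
    {a b : ℝ} (hab : a < b) :
    Ψ (x + b • d) - Ψ (x + a • d) ≤
      (-clarkeDeriv Ψ (x + b • d) (-d)) * (b - a) + K * (b - a) ^ 2 / 2 := by
  set c₀ := -clarkeDeriv Ψ (x + b • d) (-d) with hc₀
  set f : ℝ → ℝ := fun t => Ψ (x + t • d) with hf
  have hfc : Continuous f := by
    apply (psi_cont hΨlip).comp
    exact continuous_const.add (continuous_id.smul continuous_const)
  have key := image_le_of_liminf_slope_right_le_deriv_boundary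
    (f := f) (a := a) (b := b)
    (B := fun τ => f a + c₀ * (τ - a) + K * (b * (τ - a) - (τ^2 - a^2)/2))
    (B' := fun τ => c₀ + K * (b - τ))
    hfc.continuousOn (le_of_eq (by ring)) ?_ ?_ ?_ (right_mem_Icc.mpr hab.le)
  · have heq : K * (b * (b - a) - (b^2 - a^2)/2) = K * (b - a)^2 / 2 := by ring
    have kb : f b = Ψ (x + b • d) := rfl
    have ka : f a = Ψ (x + a • d) := rfl
    rw [kb, ka] at key
    linarith [key]
  · fun_prop
  · intro τ hτ
    have h2 : HasDerivAt (fun τ : ℝ => τ - a) 1 τ := (hasDerivAt_id τ).sub_const a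
    have h3 : HasDerivAt (fun τ : ℝ => τ^2) (2*τ) τ := by
      simpa using hasDerivAt_pow 2 τ
    have h4 := (h2.const_mul b).sub ((h3.sub_const (a^2)).div_const 2)
    have h5 := ((h2.const_mul c₀).const_add (f a)).add (h4.const_mul K)
    have h6 : HasDerivAt (fun τ : ℝ => f a + c₀ * (τ - a) + K * (b * (τ - a) - (τ^2 - a^2)/2))
        (c₀ + K * (b - τ)) τ := by
      exact h5.congr_deriv (by ring)
    exact h6.hasDerivWithinAt
  · intro τ hτ r hr
    have hτb : τ < b := hτ.2
    have hcl : clarkeDeriv Ψ (x + τ • d) d < r := by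
      have h := hcond τ b hτb
      simp only [hc₀] at hr
      linarith
    have hev := ev_slope_lt hΨlip (x + τ • d) d hcl
    apply Filter.Eventually.frequently
    filter_upwards [(tendsto_sub_right τ).eventually hev, eventually_mem_nhdsWithin]
      with z hz hz'
    rw [slope_def_field]
    have hxz : x + z • d = (x + τ • d) + (z - τ) • d := by module
    have : f z = Ψ ((x + τ • d) + (z - τ) • d) := by rw [hf]; simp only [hxz]
    rw [this]
    exact hz

lemma slope_lower
    (hΨlip : ∀ u : V, ∃ (L : NNReal) (s : Set V), s ∈ 𝓝 u ∧ LipschitzOnWith L Ψ s)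
    {x d : V} {K : ℝ} (hK : 0 ≤ K)
    (hcond : ∀ s t : ℝ, s < t →
      clarkeDeriv Ψ (x + s • d) d + clarkeDeriv Ψ (x + t • d) (-d) ≤ K * (t - s))
    {b c : ℝ} (hbc : b < c) :
    (-clarkeDeriv Ψ (x + b • d) (-d)) * (c - b) - K * (c - b) ^ 2 / 2 ≤
      Ψ (x + c • d) - Ψ (x + b • d) := by
  set c₀ := -clarkeDeriv Ψ (x + b • d) (-d) with hc₀
  set f : ℝ → ℝ := fun t => -Ψ (x + t • d) with hf
  have hfc : Continuous f := by
    apply Continuous.neg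
    apply (psi_cont hΨlip).comp
    exact continuous_const.add (continuous_id.smul continuous_const)
  have key := image_le_of_liminf_slope_right_le_deriv_boundary
    (f := f) (a := b) (b := c)
    (B := fun τ => f b - c₀ * (τ - b) + K * (τ - b)^2 / 2)
    (B' := fun τ => -c₀ + K * (τ - b))
    hfc.continuousOn (le_of_eq (by ring)) ?_ ?_ ?_ (right_mem_Icc.mpr hbc.le)
  · have kb : f b = -Ψ (x + b • d) := rfl
    have kc : f c = -Ψ (x + c • d) := rfl
    rw [kb, kc] at key
    linarith [key]
  · fun_prop
  · intro τ hτ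
    have h2 : HasDerivAt (fun τ : ℝ => τ - b) 1 τ := (hasDerivAt_id τ).sub_const b
    have h3 : HasDerivAt (fun τ : ℝ => (τ - b)^2) (2 * (τ - b) ^ 1 * 1) τ := h2.pow 2
    have h5 := (HasDerivAt.const_sub (f b) (h2.const_mul c₀)).add ((h3.const_mul K).div_const 2)
    have h6 : HasDerivAt (fun τ : ℝ => f b - c₀ * (τ - b) + K * (τ - b)^2 / 2)
        (-c₀ + K * (τ - b)) τ := by
      exact h5.congr_deriv (by ring)
    exact h6.hasDerivWithinAt
  · intro τ hτ r hr
    have hcl : clarkeDeriv Ψ (x + τ • d) (-d) < r := by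
      rcases eq_or_lt_of_le hτ.1 with h | h
      · simp only [hc₀] at hr
        rw [← h] at hr ⊢
        linarith
      · have h1 := hcond b τ h
        have h2 := zero_le_clarke_add hΨlip (x + b • d) d
        simp only [hc₀] at hr
        have hτb : 0 ≤ τ - b := by linarith [hτ.1]
        linarith
    have hev := ev_slope_gt hΨlip (x + τ • d) d hcl
    apply Filter.Eventually.frequently
    filter_upwards [(tendsto_sub_right τ).eventually hev, eventually_mem_nhdsWithin]
      with z hz hz'
    rw [slope_def_field]
    have hxz : x + z • d = (x + τ • d) + (z - τ) • d := by module
    have hfz : f z = -Ψ ((x + τ • d) + (z - τ) • d) := by rw [hf]; simp only [hxz]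
    have hfτ : f τ = -Ψ (x + τ • d) := rfl
    rw [hfz, hfτ]
    have he : (-Ψ (x + τ • d + (z - τ) • d) - -Ψ (x + τ • d)) / (z - τ)
        = -((Ψ (x + τ • d + (z - τ) • d) - Ψ (x + τ • d)) / (z - τ)) := by ring
    rw [he]
    linarith
end ClarkeAux

open ClarkeAux
open scoped RealInnerProductSpace

set_option maxHeartbeats 1000000 in
theorem stmt5 {V : Type*} [NormedAddCommGroup V] [InnerProductSpace ℝ V] [CompleteSpace V]
    (Ψ : V → ℝ)
    (hΨlip : ∀ u : V, ∃ (L : NNReal) (s : Set V), s ∈ 𝓝 u ∧ LipschitzOnWith L Ψ s)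
    (α : ℝ) (hα : 0 ≤ α) :
    (∀ v₁ v₂ : V,
        clarkeDeriv Ψ v₁ (v₂ - v₁) + clarkeDeriv Ψ v₂ (v₁ - v₂) ≤ α * ‖v₁ - v₂‖ ^ 2) ↔
    ConvexOn ℝ Set.univ (fun v : V => Ψ v + (α / 2) * ‖v‖ ^ 2) := by
  constructor
  · -- hard direction: Clarke condition implies convexity
    intro H
    refine ⟨convex_univ, ?_⟩
    intro p _ q _ a b ha hb hab
    set d := q - p with hd
    have Hline : ConvexOn ℝ (Set.univ : Set ℝ)
        (fun t : ℝ => Ψ (p + t • d) + (α / 2) * ‖p + t • d‖ ^ 2) := by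
      apply convexOn_of_slope_mono_adjacent convex_univ
      intro t₁ t₂ t₃ _ _ h12 h23
      set K : ℝ := α * ‖d‖^2 with hKdef
      have hK : 0 ≤ K := by positivity
      have hcond : ∀ s t : ℝ, s < t →
          clarkeDeriv Ψ (p + s • d) d + clarkeDeriv Ψ (p + t • d) (-d) ≤ K * (t - s) := by
        intro s t hst
        have hts : 0 < t - s := sub_pos.mpr hst
        have h1 := H (p + s • d) (p + t • d)
        have e1 : (p + t • d) - (p + s • d) = (t - s) • d := by module
        have e2 : (p + s • d) - (p + t • d) = (t - s) • (-d) := by module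
        rw [e1, e2] at h1
        rw [clarke_smul hΨlip _ d hts, clarke_smul hΨlip _ (-d) hts] at h1
        have e3 : ‖(t - s) • (-d)‖^2 = (t-s)^2 * ‖d‖^2 := by
          rw [norm_smul, norm_neg, Real.norm_eq_abs, mul_pow, sq_abs]
        rw [e3] at h1
        have h2 : (t - s) * (clarkeDeriv Ψ (p + s • d) d + clarkeDeriv Ψ (p + t • d) (-d))
            ≤ (t - s) * (K * (t - s)) := by
          rw [hKdef]; linarith [h1]
        exact le_of_mul_le_mul_left h2 hts
      have s₁ := slope_upper hΨlip hcond h12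
      have s₂ := slope_lower hΨlip hK hcond h23
      set c₀ := -clarkeDeriv Ψ (p + t₂ • d) (-d) with hc₀
      have hq : ∀ t : ℝ, ‖p + t • d‖^2 = ‖p‖^2 + 2*(t*⟪p,d⟫) + t^2*‖d‖^2 := by
        intro t
        have e1 : ‖p + t • d‖^2 = ‖p‖^2 + 2*⟪p, t • d⟫ + ‖t • d‖^2 := norm_add_sq_real p (t • d)
        have e2 : ⟪p, t • d⟫ = t * ⟪p,d⟫ := real_inner_smul_right p d t
        have e3 : ‖t • d‖^2 = t^2 * ‖d‖^2 := by
          rw [norm_smul, Real.norm_eq_abs, mul_pow, sq_abs]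
        rw [e1, e2, e3]
      set I : ℝ := ⟪p,d⟫ with hI
      set C := c₀ + α * I + K * t₂ with hC
      have h1 : (Ψ (p + t₂ • d) + (α / 2) * ‖p + t₂ • d‖ ^ 2)
          - (Ψ (p + t₁ • d) + (α / 2) * ‖p + t₁ • d‖ ^ 2) ≤ C * (t₂ - t₁) := by
        have e1 := hq t₁
        have e2 := hq t₂
        rw [e1, e2, hC, hKdef]
        simp only [hKdef] at s₁
        linarith [s₁]
      have h2 : C * (t₃ - t₂) ≤ (Ψ (p + t₃ • d) + (α / 2) * ‖p + t₃ • d‖ ^ 2)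
          - (Ψ (p + t₂ • d) + (α / 2) * ‖p + t₂ • d‖ ^ 2) := by
        have e2 := hq t₂
        have e3 := hq t₃
        rw [e2, e3, hC, hKdef]
        simp only [hKdef] at s₂
        linarith [s₂]
      rw [div_le_div_iff₀ (sub_pos.mpr h12) (sub_pos.mpr h23)]
      have h3 := mul_le_mul_of_nonneg_right h1 (le_of_lt (sub_pos.mpr h23))
      have h4 := mul_le_mul_of_nonneg_right h2 (le_of_lt (sub_pos.mpr h12))
      linarith [h3, h4]
    have hb1 : a • p + b • q = p + b • d := by
      have ha1 : a = 1 - b := by linarith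
      rw [ha1, hd]
      module
    have h2 := Hline.2 (mem_univ (0:ℝ)) (mem_univ (1:ℝ)) ha hb hab
    simp only [smul_eq_mul, mul_zero, mul_one, zero_add, zero_smul, add_zero, one_smul] at h2
    have hpd : p + d = q := by rw [hd]; abel
    rw [hpd] at h2
    simp only [smul_eq_mul]
    rw [hb1]
    exact h2
  · -- easy direction: convexity implies Clarke condition
    intro hconv v₁ v₂
    have hgc : Continuous fun v : V => Ψ v + (α / 2) * ‖v‖ ^ 2 := by
      apply (psi_cont hΨlip).add
      continuity
    set g : V → ℝ := fun v => Ψ v + (α / 2) * ‖v‖ ^ 2 with hg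
    have key : ∀ u v : V, clarkeDeriv Ψ u v ≤ (g (u + v) - g u) - α * ⟪u,v⟫ := by
      intro u v
      set R : V × ℝ → ℝ := fun pr =>
        (g (pr.1 + v) - g pr.1) - α * ⟪pr.1, v⟫ - α/2 * pr.2 * ‖v‖^2 with hR'
      have hRt : Tendsto R ((𝓝 u) ×ˢ 𝓝[>] (0:ℝ)) (𝓝 ((g (u + v) - g u) - α * ⟪u,v⟫)) := by
        have hle : (𝓝 u) ×ˢ 𝓝[>] (0:ℝ) ≤ 𝓝 ((u, 0) : V × ℝ) := by
          rw [nhds_prod_eq]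
          exact Filter.prod_mono le_rfl nhdsWithin_le_nhds
        have hcont : Continuous R := by
          apply Continuous.sub
          apply Continuous.sub
          · exact (hgc.comp (continuous_fst.add continuous_const)).sub (hgc.comp continuous_fst)
          · exact continuous_const.mul (continuous_fst.inner continuous_const)
          · exact (continuous_const.mul continuous_snd).mul continuous_const
        have h := (hcont.tendsto ((u, 0) : V × ℝ)).mono_left hle
        have he : R ((u, 0) : V × ℝ) = (g (u + v) - g u) - α * ⟪u,v⟫ := by
          simp [hR']
        rwa [he] at h
      have hev : ∀ᶠ pr in (𝓝 u) ×ˢ 𝓝[>] (0:ℝ),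
          (Ψ (pr.1 + pr.2 • v) - Ψ pr.1)/pr.2 ≤ R pr := by
        have hmem : (Set.univ : Set V) ×ˢ Ioc (0:ℝ) 1 ∈ (𝓝 u) ×ˢ 𝓝[>] (0:ℝ) :=
          Filter.prod_mem_prod Filter.univ_mem (Ioc_mem_nhdsGT_of_mem ⟨le_refl _, one_pos⟩)
        filter_upwards [hmem] with pr hpr
        obtain ⟨w, lam⟩ := pr
        obtain ⟨-, hl0, hl1⟩ := hpr
        have hcvx := hconv.2 (mem_univ w) (mem_univ (w + v))
          (sub_nonneg.mpr hl1) (le_of_lt hl0)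
          (show (1 - lam) + lam = 1 by ring)
        have e0 : (1 - lam) • w + lam • (w + v) = w + lam • v := by module
        rw [e0] at hcvx
        simp only [smul_eq_mul, hg] at hcvx
        have hnorm : ‖w + lam • v‖^2 = ‖w‖^2 + 2*lam*⟪w,v⟫ + lam^2*‖v‖^2 := by
          rw [norm_add_sq_real, real_inner_smul_right, norm_smul, Real.norm_eq_abs,
            mul_pow, sq_abs]
          ring
        rw [hnorm] at hcvx
        rw [div_le_iff₀ hl0]
        simp only [hR', hg]
        nlinarith [hcvx]
      obtain ⟨C, hC0, hC⟩ := ev_bdd hΨlip u v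
      have hcb : Filter.IsCoboundedUnder (· ≤ ·) ((𝓝 u) ×ˢ 𝓝[>] (0:ℝ)) (slf Ψ v) :=
        Filter.IsBoundedUnder.isCoboundedUnder_le
          ⟨-C, Filter.eventually_map.mpr (hC.mono fun p hp => neg_le_of_abs_le hp)⟩
      calc clarkeDeriv Ψ u v ≤ Filter.limsup R ((𝓝 u) ×ˢ 𝓝[>] (0:ℝ)) := by
            rw [clarke_eq]
            exact Filter.limsup_le_limsup hev hcb hRt.isBoundedUnder_le
        _ = (g (u + v) - g u) - α * ⟪u,v⟫ := hRt.limsup_eq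
    have k1 := key v₁ (v₂ - v₁)
    have k2 := key v₂ (v₁ - v₂)
    have e1 : v₁ + (v₂ - v₁) = v₂ := by abel
    have e2 : v₂ + (v₁ - v₂) = v₁ := by abel
    rw [e1] at k1
    rw [e2] at k2
    have base : ⟪v₁, v₂ - v₁⟫ + ⟪v₂, v₁ - v₂⟫ = -‖v₁ - v₂‖^2 := by
      rw [inner_sub_right, inner_sub_right]
      have h1 : ⟪v₁, v₁⟫ = ‖v₁‖^2 := real_inner_self_eq_norm_sq v₁
      have h2 : ⟪v₂, v₂⟫ = ‖v₂‖^2 := real_inner_self_eq_norm_sq v₂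
      have h3 : ‖v₁ - v₂‖^2 = ‖v₁‖^2 - 2*⟪v₁,v₂⟫ + ‖v₂‖^2 := norm_sub_sq_real v₁ v₂
      have h4 : ⟪v₂, v₁⟫ = ⟪v₁, v₂⟫ := real_inner_comm v₁ v₂
      rw [h1, h2, h4]
      linarith
    have hi' : α * (⟪v₁, v₂ - v₁⟫ + ⟪v₂, v₁ - v₂⟫) = α * (-‖v₁ - v₂‖^2) := by
      rw [base]
    linarith [k1, k2, hi']
end

section
/- Assume the abstract VHI data hypotheses with α_Ψ < m_A. Then there exists a unique u ∈ K such that ⟨Au, v − u⟩ + Φ(v) − Φ(u) + Ψ⁰(u; v − u) ≥ ⟨f, v − u⟩ for all v ∈ K. -/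
set_option maxHeartbeats 1000000
set_option synthInstance.maxHeartbeats 400000

open Filter Topology Set

namespace VHIaux

lemma le_of_forall_pos_le_add' {a b : ℝ} (h : ∀ ε : ℝ, 0 < ε → a ≤ b + ε) : a ≤ b := by
  by_contra hlt
  push_neg at hlt
  have := h ((a - b)/2) (by linarith)
  linarith

variable {X : Type*} [NormedAddCommGroup X] [NormedSpace ℝ X]

/-- The filter used in the Clarke derivative. -/
def cFil (u : X) : Filter (X × ℝ) := (𝓝 u) ×ˢ 𝓝[>] (0:ℝ)

/-- The difference quotient used in the Clarke derivative. -/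
noncomputable def cq (f : X → ℝ) (v : X) (p : X × ℝ) : ℝ := (f (p.1 + p.2 • v) - f p.1) / p.2

lemma clarkeDeriv_eq (f : X → ℝ) (u v : X) :
    clarkeDeriv f u v = Filter.limsup (cq f v) (cFil u) := rfl

instance cFil_neBot (u : X) : (cFil u).NeBot := by
  have : (𝓝[>] (0:ℝ)).NeBot := nhdsGT_neBot 0
  exact Filter.prod_neBot.2 ⟨inferInstance, this⟩

lemma eventually_pos (u : X) : ∀ᶠ p : X × ℝ in cFil u, 0 < p.2 := by
  have h : ∀ᶠ t in 𝓝[>] (0:ℝ), 0 < t := eventually_mem_nhdsWithin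
  exact Filter.Eventually.prod_inr h _

/-- Locally Lipschitz in the sense used in the problem statement. -/
def LocLip (f : X → ℝ) : Prop :=
  ∀ u : X, ∃ (L : NNReal) (s : Set X), s ∈ 𝓝 u ∧ LipschitzOnWith L f s

omit [NormedSpace ℝ X] in
lemma LocLip.continuous {f : X → ℝ} (hf : LocLip f) : Continuous f := by
  rw [continuous_iff_continuousAt]
  intro u
  obtain ⟨L, s, hs, hlip⟩ := hf u
  exact (hlip.continuousOn).continuousAt hs

/-- Master bound: the Clarke difference quotients are eventually bounded. -/
lemma LocLip.event_bound {f : X → ℝ} (hf : LocLip f) (u v : X) :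
    ∃ C : ℝ, 0 ≤ C ∧ ∀ᶠ p in cFil u, |cq f v p| ≤ C := by
  obtain ⟨L, s, hs, hlip⟩ := hf u
  obtain ⟨ε, hε, hball⟩ := Metric.mem_nhds_iff.1 hs
  refine ⟨L * ‖v‖, by positivity, ?_⟩
  have h1 : ∀ᶠ w in 𝓝 u, w ∈ Metric.ball u (ε/2) :=
    Metric.ball_mem_nhds u (by linarith)
  have h2 : ∀ᶠ t in 𝓝[>] (0:ℝ), t ∈ Ioo 0 (ε/(2*(‖v‖+1))) :=
    Ioo_mem_nhdsGT_of_mem ⟨le_refl 0, by positivity⟩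
  have hE : ∀ᶠ p : X × ℝ in cFil u,
      p.1 ∈ Metric.ball u (ε/2) ∧ p.2 ∈ Ioo 0 (ε/(2*(‖v‖+1))) :=
    (h1.prod_inl (𝓝[>] (0:ℝ))).and (h2.prod_inr (𝓝 u))
  refine hE.mono ?_
  rintro ⟨w, t⟩ ⟨hw, ht0, ht1⟩
  simp only at hw ht0 ht1
  simp only [cq]
  have hvpos : (0:ℝ) < ‖v‖ + 1 := by positivity
  have hws : w ∈ s := hball (by
    simp only [Metric.mem_ball] at hw ⊢; linarith)
  have htv : t * ‖v‖ ≤ ε / 2 := by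
    have h3 : t * ‖v‖ ≤ (ε/(2*(‖v‖+1))) * (‖v‖+1) := by
      apply mul_le_mul ht1.le (by linarith) (norm_nonneg v) (by positivity)
    calc t * ‖v‖ ≤ (ε/(2*(‖v‖+1))) * (‖v‖+1) := h3
    _ = ε / 2 := by field_simp
  have hw2s : w + t • v ∈ s := by
    apply hball
    simp only [Metric.mem_ball] at hw ⊢
    calc dist (w + t • v) u ≤ dist (w + t • v) w + dist w u := dist_triangle _ _ _
    _ < t * ‖v‖ + ε/2 := by
        have : dist (w + t • v) w = t * ‖v‖ := by
          rw [dist_eq_norm]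
          simp [norm_smul, abs_of_pos ht0]
        linarith
    _ ≤ ε := by linarith
  have hd := (lipschitzOnWith_iff_dist_le_mul.1 hlip) _ hw2s _ hws
  rw [dist_eq_norm, dist_eq_norm] at hd
  have hnorm : ‖w + t • v - w‖ = t * ‖v‖ := by
    simp [norm_smul, abs_of_pos ht0]
  rw [hnorm] at hd
  rw [abs_div, abs_of_pos ht0, div_le_iff₀ ht0]
  calc |f (w + t • v) - f w| ≤ L * (t * ‖v‖) := hd
  _ = L * ‖v‖ * t := by ring

lemma isBoundedUnder_le_of_event {ι : Type*} {F : Filter ι} {q : ι → ℝ} {C : ℝ}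
    (h : ∀ᶠ x in F, |q x| ≤ C) : F.IsBoundedUnder (· ≤ ·) q :=
  ⟨C, h.mono fun _ hx => (abs_le.1 hx).2⟩

lemma isBoundedUnder_ge_of_event {ι : Type*} {F : Filter ι} {q : ι → ℝ} {C : ℝ}
    (h : ∀ᶠ x in F, |q x| ≤ C) : F.IsBoundedUnder (· ≥ ·) q :=
  ⟨-C, h.mono fun _ hx => (abs_le.1 hx).1⟩

/-- One-sided limsup sum rule. -/
lemma limsup_add_tendsto_le {ι : Type*} {F : Filter ι} [F.NeBot] {q g : ι → ℝ} {l C : ℝ}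
    (hbd : ∀ᶠ x in F, |q x| ≤ C) (hg : Tendsto g F (𝓝 l)) :
    Filter.limsup (fun x => q x + g x) F ≤ Filter.limsup q F + l := by
  apply le_of_forall_pos_le_add'
  intro ε hε
  have hev : ∀ᶠ x in F, g x ≤ l + ε := hg.eventually (eventually_le_nhds (by linarith))
  have hevg : ∀ᶠ x in F, l - ε ≤ g x := hg.eventually (eventually_ge_nhds (by linarith))
  have h1 : Filter.limsup (fun x => q x + g x) F ≤ Filter.limsup (fun x => q x + (l + ε)) F := by
    refine Filter.limsup_le_limsup (by
        filter_upwards [hbd, hev] with x hx1 hx2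
        have := (abs_le.1 hx1).2; linarith)
      (hu := Filter.isCoboundedUnder_le_of_eventually_le F (x := -C + (l - ε)) (by
        filter_upwards [hbd, hevg] with x hx1 hx2
        have := (abs_le.1 hx1).1; linarith))
      (hv := ⟨C + (l + ε), by
        rw [Filter.eventually_map]
        filter_upwards [hbd] with x hx
        have := (abs_le.1 hx).2; linarith⟩)
  have h2 : Filter.limsup (fun x => q x + (l + ε)) F = Filter.limsup q F + (l + ε) :=
    limsup_add_const F q (l + ε) (isBoundedUnder_le_of_event hbd)
      ((isBoundedUnder_ge_of_event hbd).isCoboundedUnder_le)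
  rw [h2] at h1
  linarith

/-- limsup sum rule with a convergent summand. -/
lemma limsup_add_tendsto {ι : Type*} {F : Filter ι} [F.NeBot] {q g : ι → ℝ} {l C : ℝ}
    (hbd : ∀ᶠ x in F, |q x| ≤ C) (hg : Tendsto g F (𝓝 l)) :
    Filter.limsup (fun x => q x + g x) F = Filter.limsup q F + l := by
  refine le_antisymm (limsup_add_tendsto_le hbd hg) ?_
  have hbd2 : ∀ᶠ x in F, |q x + g x| ≤ C + (|l| + 1) := by
    have hgev : ∀ᶠ x in F, |g x| ≤ |l| + 1 := by
      have h5 := hg.eventually (eventually_le_nhds (show l < l + 1 by linarith))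
      have h6 := hg.eventually (eventually_ge_nhds (show l - 1 < l by linarith))
      exact (h5.and h6).mono fun x hx => by
        rw [abs_le]
        have h7 := abs_nonneg l
        have h8 := le_abs_self l
        have h9 := neg_abs_le l
        exact ⟨by linarith [hx.2], by linarith [hx.1]⟩
    exact (hbd.and hgev).mono fun x ⟨h1, h2⟩ => (abs_add_le _ _).trans (by linarith)
  have hneg : Tendsto (fun x => -g x) F (𝓝 (-l)) := hg.neg
  have h3 := limsup_add_tendsto_le hbd2 hneg
  have h4 : Filter.limsup (fun x => (q x + g x) + (-g x)) F = Filter.limsup q F := by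
    apply Filter.limsup_congr
    exact Eventually.of_forall fun x => by ring
  rw [h4] at h3
  linarith

/-- limsup of a composition along a tendsto map is at most the limsup. -/
lemma limsup_comp_le {ι κ : Type*} {F : Filter ι} {G : Filter κ} [G.NeBot] {m : κ → ι}
    {q : ι → ℝ} {C : ℝ} (hm : Tendsto m G F) (hbd : ∀ᶠ p in F, |q p| ≤ C) :
    Filter.limsup (fun y => q (m y)) G ≤ Filter.limsup q F := by
  have key : Filter.limsup (fun y => q (m y)) G = Filter.limsup q (Filter.map m G) := by
    simp only [Filter.limsup, Filter.map_map]; rfl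
  rw [key]
  refine Filter.limsup_le_limsup_of_le hm
    (hf := ?_) (hg := isBoundedUnder_le_of_event hbd)
  apply Filter.isCoboundedUnder_le_of_eventually_le (Filter.map m G) (x := -C)
  rw [Filter.eventually_map]
  exact (hm.eventually hbd).mono fun y hy => (abs_le.1 hy).1

/-- Lower bound on a limsup via a subfilter. -/
lemma le_limsup_of_subfilter {ι κ : Type*} {F : Filter ι} {G : Filter κ} [G.NeBot] {m : κ → ι}
    {q : ι → ℝ} {c C : ℝ} (hm : Tendsto m G F) (hbd : ∀ᶠ p in F, |q p| ≤ C)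
    (h : ∀ᶠ y in G, c ≤ q (m y)) : c ≤ Filter.limsup q F := by
  apply Filter.le_limsup_of_frequently_le _ (isBoundedUnder_le_of_event hbd)
  have h1 : ∀ᶠ x in Filter.map m G, c ≤ q x := Filter.eventually_map.2 h
  exact h1.frequently.filter_mono hm


lemma tendsto_fst' (u : X) : Tendsto (fun p : X × ℝ => p.1) (cFil u) (𝓝 u) := tendsto_fst

lemma tendsto_snd' (u : X) : Tendsto (fun p : X × ℝ => p.2) (cFil u) (𝓝[>] (0:ℝ)) := tendsto_snd

lemma tendsto_snd0 (u : X) : Tendsto (fun p : X × ℝ => p.2) (cFil u) (𝓝 (0:ℝ)) :=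
  (tendsto_snd' u).mono_right nhdsWithin_le_nhds

lemma tendsto_shift (u v : X) :
    Tendsto (fun p : X × ℝ => (p.1 + p.2 • v, p.2)) (cFil u) (cFil u) := by
  refine Tendsto.prodMk ?_ (tendsto_snd' u)
  have h1 : Tendsto (fun p : X × ℝ => p.1 + p.2 • v) (cFil u) (𝓝 (u + (0:ℝ) • v)) :=
    (tendsto_fst' u).add ((tendsto_snd0 u).smul_const v)
  simpa using h1

lemma map_shift_eq (u v : X) :
    Filter.map (fun p : X × ℝ => (p.1 + p.2 • v, p.2)) (cFil u) = cFil u := by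
  apply le_antisymm (tendsto_shift u v)
  have h2 : Filter.map (fun p : X × ℝ => (p.1 + p.2 • (-v), p.2)) (cFil u) ≤ cFil u :=
    tendsto_shift u (-v)
  have h3 : Filter.map (fun p : X × ℝ => (p.1 + p.2 • v, p.2))
        (Filter.map (fun p : X × ℝ => (p.1 + p.2 • (-v), p.2)) (cFil u))
      ≤ Filter.map (fun p : X × ℝ => (p.1 + p.2 • v, p.2)) (cFil u) := Filter.map_mono h2
  rw [Filter.map_map] at h3
  have h4 : ((fun p : X × ℝ => (p.1 + p.2 • v, p.2)) ∘ (fun p : X × ℝ => (p.1 + p.2 • (-v), p.2)))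
      = id := by
    funext p
    simp [Function.comp, smul_neg]
  rw [h4, Filter.map_id] at h3
  exact h3

lemma clarkeDeriv_neg (f : X → ℝ) (u v : X) :
    clarkeDeriv (fun x => -(f x)) u v = clarkeDeriv f u (-v) := by
  rw [clarkeDeriv_eq, clarkeDeriv_eq]
  have hq : ∀ p : X × ℝ,
      cq (fun x => -(f x)) v p = cq f (-v) ((fun p : X × ℝ => (p.1 + p.2 • v, p.2)) p) := by
    intro p
    simp only [cq, Function.comp, smul_neg, add_neg_cancel_right]
    ring
  rw [Filter.limsup_congr (Eventually.of_forall hq)]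
  have key : Filter.limsup
        (fun p : X × ℝ => cq f (-v) ((fun p : X × ℝ => (p.1 + p.2 • v, p.2)) p)) (cFil u)
      = Filter.limsup (cq f (-v)) (Filter.map (fun p : X × ℝ => (p.1 + p.2 • v, p.2)) (cFil u)) := by
    simp only [Filter.limsup, Filter.map_map]; rfl
  rw [key, map_shift_eq]

lemma le_clarkeDeriv_of_quot {f : X → ℝ} {u v : X} {c C : ℝ}
    (hbd : ∀ᶠ p in cFil u, |cq f v p| ≤ C)
    (h : ∀ᶠ t in 𝓝[>] (0:ℝ), c ≤ (f (u + t • v) - f u) / t) : c ≤ clarkeDeriv f u v := by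
  rw [clarkeDeriv_eq]
  haveI : (𝓝[>] (0:ℝ)).NeBot := nhdsGT_neBot 0
  refine le_limsup_of_subfilter (G := 𝓝[>] (0:ℝ)) (m := fun t : ℝ => ((u : X), t)) ?_ hbd ?_
  · exact Tendsto.prodMk tendsto_const_nhds tendsto_id
  · exact h

lemma clarke_nonneg_of_localMin {f : X → ℝ} (hf : LocLip f) {p : X}
    (h : ∀ᶠ w in 𝓝 p, f p ≤ f w) (s : X) : 0 ≤ clarkeDeriv f p s := by
  obtain ⟨C, _, hbd⟩ := hf.event_bound p s
  apply le_clarkeDeriv_of_quot hbd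
  have htend : Tendsto (fun t : ℝ => p + t • s) (𝓝[>] (0:ℝ)) (𝓝 p) := by
    have h1 : Tendsto (fun t : ℝ => p + t • s) (𝓝 (0:ℝ)) (𝓝 (p + (0:ℝ) • s)) :=
      (tendsto_const_nhds.add ((tendsto_id).smul_const s))
    have h2 : Tendsto (fun t : ℝ => p + t • s) (𝓝 (0:ℝ)) (𝓝 p) := by simpa using h1
    exact h2.mono_left nhdsWithin_le_nhds
  filter_upwards [htend.eventually h, eventually_mem_nhdsWithin] with t h1 h2
  exact div_nonneg (by linarith) (le_of_lt h2)

lemma clarkeDeriv_add_mul_id (φ : ℝ → ℝ) (hφ : LocLip φ) (μ : ℝ) (t s : ℝ) :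
    clarkeDeriv (fun x => φ x + μ * x) t s = clarkeDeriv φ t s + μ * s := by
  obtain ⟨C, _, hbd⟩ := hφ.event_bound t s
  rw [clarkeDeriv_eq, clarkeDeriv_eq]
  have hcong : ∀ᶠ p in cFil t, cq (fun x => φ x + μ * x) s p = cq φ s p + μ * s := by
    filter_upwards [eventually_pos t] with p hp
    simp only [cq, smul_eq_mul]
    field_simp
    ring
  rw [Filter.limsup_congr hcong]
  exact limsup_add_tendsto hbd tendsto_const_nhds

lemma clarkeDeriv_comp_line {g : X → ℝ} (hg : LocLip g) (x e : X) (t s : ℝ) :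
    clarkeDeriv (fun τ : ℝ => g (x + τ • e)) t s ≤ clarkeDeriv g (x + t • e) (s • e) := by
  obtain ⟨C, _, hbd⟩ := hg.event_bound (x + t • e) (s • e)
  rw [clarkeDeriv_eq, clarkeDeriv_eq]
  have hkey : ∀ p : ℝ × ℝ,
      cq (fun τ => g (x + τ • e)) s p = cq g (s • e) (x + p.1 • e, p.2) := by
    intro p
    simp only [cq, smul_eq_mul]
    congr 3
    rw [add_smul, mul_smul]
    abel
  rw [Filter.limsup_congr (Eventually.of_forall hkey)]
  refine limsup_comp_le (m := fun p : ℝ × ℝ => ((x + p.1 • e : X), p.2)) ?_ hbd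
  refine Tendsto.prodMk ?_ (tendsto_snd' t)
  exact (Tendsto.smul_const (tendsto_fst' t) e).const_add x

omit [NormedSpace ℝ X] in
lemma LocLip.add {f g : X → ℝ} (hf : LocLip f) (hg : LocLip g) :
    LocLip (fun x => f x + g x) := by
  intro u
  obtain ⟨L1, s1, hs1, h1⟩ := hf u
  obtain ⟨L2, s2, hs2, h2⟩ := hg u
  refine ⟨L1 + L2, s1 ∩ s2, Filter.inter_mem hs1 hs2, ?_⟩
  rw [lipschitzOnWith_iff_dist_le_mul]
  intro a ha b hb
  have d1 := (lipschitzOnWith_iff_dist_le_mul.1 h1) a ha.1 b hb.1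
  have d2 := (lipschitzOnWith_iff_dist_le_mul.1 h2) a ha.2 b hb.2
  rw [Real.dist_eq] at d1 d2 ⊢
  have habs : |f a + g a - (f b + g b)| ≤ |f a - f b| + |g a - g b| := by
    have := abs_add_le (f a - f b) (g a - g b)
    rw [show f a + g a - (f b + g b) = f a - f b + (g a - g b) by ring]
    exact this
  push_cast
  linarith

omit [NormedSpace ℝ X] in
lemma LocLip.neg {f : X → ℝ} (hf : LocLip f) : LocLip (fun x => -(f x)) := by
  intro u
  obtain ⟨L, s, hs, h⟩ := hf u
  refine ⟨L, s, hs, ?_⟩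
  rw [lipschitzOnWith_iff_dist_le_mul] at h ⊢
  intro a ha b hb
  have := h a ha b hb
  rw [Real.dist_eq] at this ⊢
  rw [show -f a - -f b = -(f a - f b) by ring, abs_neg]
  exact this

lemma locLip_linear (μ : ℝ) : LocLip (fun x : ℝ => μ * x) := by
  intro u
  refine ⟨⟨|μ|, abs_nonneg μ⟩, univ, Filter.univ_mem, ?_⟩
  refine lipschitzOnWith_iff_dist_le_mul.2 ?_
  intro a _ b _
  rw [Real.dist_eq, Real.dist_eq]
  change _ ≤ |μ| * _
  rw [← abs_mul]
  apply le_of_eq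
  congr 1
  ring

lemma LocLip.comp_line {g : X → ℝ} (hg : LocLip g) (x e : X) :
    LocLip (fun τ : ℝ => g (x + τ • e)) := by
  intro τ₀
  obtain ⟨L, s, hs, hlip⟩ := hg (x + τ₀ • e)
  have hcont : Continuous (fun τ : ℝ => x + τ • e) :=
    continuous_const.add (continuous_id.smul continuous_const)
  have haff : LipschitzWith ‖e‖₊ (fun τ : ℝ => x + τ • e) := by
    apply LipschitzWith.of_dist_le_mul
    intro a b
    have hsub : (x + a • e) - (x + b • e) = (a - b) • e := by
      rw [sub_smul]; abel
    rw [dist_eq_norm, hsub, norm_smul, Real.norm_eq_abs, Real.dist_eq, coe_nnnorm, mul_comm]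
  refine ⟨L * ‖e‖₊, (fun τ : ℝ => x + τ • e) ⁻¹' s, ?_, ?_⟩
  · exact hcont.continuousAt.preimage_mem_nhds hs
  · have hmt : Set.MapsTo (fun τ : ℝ => x + τ • e) ((fun τ : ℝ => x + τ • e) ⁻¹' s) s :=
      fun τ hτ => hτ
    have hc := hlip.comp (haff.lipschitzOnWith) hmt
    exact hc


/-! ### One-dimensional convexity from a monotone Clarke derivative -/

/-- Nonsmooth mean value inequality: between any two points there is a point where the
Clarke derivative dominates the slope in every direction. -/
lemma exists_clarke_slope (φ : ℝ → ℝ) (hloc : LocLip φ) {a b : ℝ} (hab : a < b) :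
    ∃ ζ, a < ζ ∧ ζ < b ∧ ∀ s : ℝ, ((φ b - φ a) / (b - a)) * s ≤ clarkeDeriv φ ζ s := by
  set μ := (φ b - φ a) / (b - a) with hμ
  set h : ℝ → ℝ := fun t => φ t + (-μ) * t with hh
  have hlochm : LocLip h := hloc.add (locLip_linear (-μ))
  have hconth : Continuous h := hlochm.continuous
  have hbm : h b = h a := by
    simp only [hh]
    have : μ * (b - a) = φ b - φ a := by
      rw [hμ]
      exact div_mul_cancel₀ _ (by linarith : b - a ≠ 0)
    nlinarith [this]
  -- the key step at an interior local minimizer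
  have key : ∀ ζ, a < ζ → ζ < b → (∀ᶠ w in 𝓝 ζ, h ζ ≤ h w) →
      ∀ s : ℝ, μ * s ≤ clarkeDeriv φ ζ s := by
    intro ζ h1 h2 hmin s
    have h3 : 0 ≤ clarkeDeriv h ζ s := clarke_nonneg_of_localMin hlochm hmin s
    rw [clarkeDeriv_add_mul_id φ hloc (-μ) ζ s] at h3
    linarith
  -- the key step at an interior local maximizer
  have key2 : ∀ ζ, a < ζ → ζ < b → (∀ᶠ w in 𝓝 ζ, h w ≤ h ζ) →
      ∀ s : ℝ, μ * s ≤ clarkeDeriv φ ζ s := by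
    intro ζ h1 h2 hmax s
    have hmin : ∀ᶠ w in 𝓝 ζ, (fun x => -(h x)) ζ ≤ (fun x => -(h x)) w :=
      hmax.mono fun w hw => by simpa using hw
    have h3 : 0 ≤ clarkeDeriv (fun x => -(h x)) ζ (-s) :=
      clarke_nonneg_of_localMin hlochm.neg hmin (-s)
    have h4 : (fun x => -(h x)) = fun x => (fun y => -(φ y)) x + μ * x := by
      funext x; simp only [hh]; ring
    rw [h4, clarkeDeriv_add_mul_id _ hloc.neg μ ζ (-s),
      clarkeDeriv_neg φ ζ (-s), neg_neg] at h3
    linarith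
  obtain ⟨p, hp, hpmin⟩ := (isCompact_Icc (a := a) (b := b)).exists_isMinOn
    (nonempty_Icc.2 hab.le) hconth.continuousOn
  obtain ⟨q, hq, hqmax⟩ := (isCompact_Icc (a := a) (b := b)).exists_isMaxOn
    (nonempty_Icc.2 hab.le) hconth.continuousOn
  by_cases hpa : p ∈ Ioo a b
  · refine ⟨p, hpa.1, hpa.2, key p hpa.1 hpa.2 ?_⟩
    have : Icc a b ∈ 𝓝 p := Icc_mem_nhds hpa.1 hpa.2
    filter_upwards [this] with w hw
    exact hpmin hw
  · by_cases hqa : q ∈ Ioo a b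
    · refine ⟨q, hqa.1, hqa.2, key2 q hqa.1 hqa.2 ?_⟩
      have : Icc a b ∈ 𝓝 q := Icc_mem_nhds hqa.1 hqa.2
      filter_upwards [this] with w hw
      exact hqmax hw
    · -- both extrema at endpoints: h is constant on [a,b]
      have hpval : h p = h a := by
        rcases (mem_Icc.1 hp).1.eq_or_lt with h1 | h1
        · rw [← h1]
        · rcases (mem_Icc.1 hp).2.eq_or_lt with h2 | h2
          · rw [h2, hbm]
          · exact absurd ⟨h1, h2⟩ hpa
      have hqval : h q = h a := by
        rcases (mem_Icc.1 hq).1.eq_or_lt with h1 | h1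
        · rw [← h1]
        · rcases (mem_Icc.1 hq).2.eq_or_lt with h2 | h2
          · rw [h2, hbm]
          · exact absurd ⟨h1, h2⟩ hqa
      have hconst : ∀ w ∈ Icc a b, h w = h a := by
        intro w hw
        have hl := hpmin hw
        have hu := hqmax hw
        simp only [IsMinOn, IsMaxOn] at *
        have : h p ≤ h w := hl
        have : h w ≤ h q := hu
        rw [hpval] at hl
        rw [hqval] at hu
        exact le_antisymm hu hl
      set ζ := (a + b)/2 with hζ
      have hζ1 : a < ζ := by rw [hζ]; linarith
      have hζ2 : ζ < b := by rw [hζ]; linarith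
      refine ⟨ζ, hζ1, hζ2, key ζ hζ1 hζ2 ?_⟩
      have : Icc a b ∈ 𝓝 ζ := Icc_mem_nhds hζ1 hζ2
      filter_upwards [this] with w hw
      rw [hconst w hw, hconst ζ (mem_Icc.2 ⟨hζ1.le, hζ2.le⟩)]

/-- A locally Lipschitz function on `ℝ` whose Clarke derivative is "monotone" is convex
(three point inequality). -/
lemma convex_of_clarke_mono (φ : ℝ → ℝ) (hloc : LocLip φ)
    (h2 : ∀ s t : ℝ, clarkeDeriv φ s (t - s) + clarkeDeriv φ t (s - t) ≤ 0)
    {b : ℝ} (hb0 : 0 < b) (hb1 : b < 1) : φ b ≤ (1 - b) * φ 0 + b * φ 1 := by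
  obtain ⟨ζ₁, hζ₁a, hζ₁b, hs₁⟩ := exists_clarke_slope φ hloc hb0
  obtain ⟨ζ₂, hζ₂a, hζ₂b, hs₂⟩ := exists_clarke_slope φ hloc (show b < 1 from hb1)
  have hζ : ζ₁ < ζ₂ := lt_trans hζ₁b hζ₂a
  have e₁ := hs₁ (ζ₂ - ζ₁)
  have e₂ := hs₂ (ζ₁ - ζ₂)
  have e₃ := h2 ζ₁ ζ₂
  have hslope : ((φ b - φ 0) / (b - 0)) * (ζ₂ - ζ₁) + ((φ 1 - φ b) / (1 - b)) * (ζ₁ - ζ₂) ≤ 0 := by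
    linarith
  have hmono : (φ b - φ 0) / b ≤ (φ 1 - φ b) / (1 - b) := by
    have hzz : 0 < ζ₂ - ζ₁ := by linarith
    rw [sub_zero] at hslope
    nlinarith
  have h1b : 0 < 1 - b := by linarith
  rw [div_le_div_iff₀ hb0 h1b] at hmono
  nlinarith


/-! ### Inner product space lemmas -/

section InnerSpace

open RealInnerProductSpace

variable {V : Type*} [NormedAddCommGroup V] [InnerProductSpace ℝ V]

lemma locLip_norm_sq (α : ℝ) : LocLip (fun x : V => α / 2 * ‖x‖ ^ 2) := by
  intro u
  refine ⟨⟨|α| * (‖u‖ + 1), by positivity⟩, Metric.ball u 1, Metric.ball_mem_nhds u one_pos, ?_⟩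
  refine lipschitzOnWith_iff_dist_le_mul.2 ?_
  intro x hx y hy
  rw [Metric.mem_ball, dist_eq_norm] at hx hy
  rw [Real.dist_eq, dist_eq_norm]
  change _ ≤ (|α| * (‖u‖ + 1)) * _
  have hxu : ‖x‖ ≤ ‖u‖ + 1 := by
    have := norm_sub_norm_le x u
    linarith
  have hyu : ‖y‖ ≤ ‖u‖ + 1 := by
    have := norm_sub_norm_le y u
    linarith
  have hfac : α / 2 * ‖x‖ ^ 2 - α / 2 * ‖y‖ ^ 2 = α / 2 * ((‖x‖ - ‖y‖) * (‖x‖ + ‖y‖)) := by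
    ring
  rw [hfac, abs_mul, abs_mul]
  have h1 : |‖x‖ - ‖y‖| ≤ ‖x - y‖ := abs_norm_sub_norm_le x y
  have h2 : |‖x‖ + ‖y‖| ≤ 2 * (‖u‖ + 1) := by
    rw [abs_of_nonneg (by positivity)]
    linarith
  have h3 : |α / 2| = |α| / 2 := by
    rw [abs_div]
    norm_num
  rw [h3]
  have h4 : |‖x‖ - ‖y‖| * |‖x‖ + ‖y‖| ≤ ‖x - y‖ * (2 * (‖u‖ + 1)) := by
    apply mul_le_mul h1 h2 (abs_nonneg _) (norm_nonneg _)
  calc |α| / 2 * (|‖x‖ - ‖y‖| * |‖x‖ + ‖y‖|) ≤ |α| / 2 * (‖x - y‖ * (2 * (‖u‖ + 1))) := by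
        apply mul_le_mul_of_nonneg_left h4 (by positivity)
  _ = |α| * (‖u‖ + 1) * ‖x - y‖ := by ring

lemma clarkeDeriv_add_sq (Ψ : V → ℝ) (hΨ : LocLip Ψ) (α : ℝ) (u v : V) :
    clarkeDeriv (fun x => Ψ x + α / 2 * ‖x‖ ^ 2) u v = clarkeDeriv Ψ u v + α * ⟪u, v⟫ := by
  obtain ⟨C, _, hbd⟩ := hΨ.event_bound u v
  rw [clarkeDeriv_eq, clarkeDeriv_eq]
  have hcong : ∀ᶠ p in cFil u, cq (fun x => Ψ x + α / 2 * ‖x‖ ^ 2) v p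
      = cq Ψ v p + (α * ⟪p.1, v⟫ + p.2 * (α / 2 * ‖v‖ ^ 2)) := by
    filter_upwards [eventually_pos u] with p hp
    have hexp : ‖p.1 + p.2 • v‖ ^ 2 = ‖p.1‖ ^ 2 + 2 * (p.2 * ⟪p.1, v⟫) + p.2 ^ 2 * ‖v‖ ^ 2 := by
      rw [norm_add_sq_real, real_inner_smul_right, norm_smul, Real.norm_eq_abs, mul_pow, sq_abs]
    simp only [cq]
    rw [hexp]
    field_simp
    ring
  rw [Filter.limsup_congr hcong]
  apply limsup_add_tendsto hbd
  have h1 : Tendsto (fun p : V × ℝ => α * ⟪p.1, v⟫) (cFil u) (𝓝 (α * ⟪u, v⟫)) := by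
    have hcont : Continuous (fun w : V => α * ⟪w, v⟫) :=
      continuous_const.mul (continuous_id.inner continuous_const)
    exact (hcont.tendsto u).comp (tendsto_fst' u)
  have h2 : Tendsto (fun p : V × ℝ => p.2 * (α / 2 * ‖v‖ ^ 2)) (cFil u) (𝓝 0) := by
    have := (tendsto_snd0 u).mul_const (α / 2 * ‖v‖ ^ 2)
    simpa using this
  simpa using h1.add h2

/-- The regularized function `Ψ + α/2 ‖·‖²` is convex when the Clarke derivative of `Ψ`
satisfies the one-sided monotonicity estimate. -/
lemma tilde_convexOn (Ψ : V → ℝ) (hΨ : LocLip Ψ) (α : ℝ)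
    (hmon : ∀ v₁ v₂ : V, clarkeDeriv Ψ v₁ (v₂ - v₁) + clarkeDeriv Ψ v₂ (v₁ - v₂)
      ≤ α * ‖v₁ - v₂‖ ^ 2) :
    ConvexOn ℝ Set.univ (fun x : V => Ψ x + α / 2 * ‖x‖ ^ 2) := by
  set g : V → ℝ := fun x => Ψ x + α / 2 * ‖x‖ ^ 2 with hg
  have hlocg : LocLip g := hΨ.add (locLip_norm_sq α)
  -- two-point property for g
  have h2g : ∀ X Y : V, clarkeDeriv g X (Y - X) + clarkeDeriv g Y (X - Y) ≤ 0 := by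
    intro X Y
    rw [hg, clarkeDeriv_add_sq Ψ hΨ α X (Y - X), clarkeDeriv_add_sq Ψ hΨ α Y (X - Y)]
    have hin : ⟪X, Y - X⟫ + ⟪Y, X - Y⟫ = -‖X - Y‖ ^ 2 := by
      have h1 : ⟪X, Y - X⟫ + ⟪Y, X - Y⟫ = -(⟪X - Y, X - Y⟫) := by
        rw [show (Y : V) - X = -(X - Y) by abel, inner_neg_right, inner_sub_left]
        ring
      rw [h1, real_inner_self_eq_norm_sq]
    have hM := hmon X Y
    have h5 : α * (⟪X, Y - X⟫ + ⟪Y, X - Y⟫) = α * (-‖X - Y‖ ^ 2) := by rw [hin]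
    nlinarith [h5, hM]
  refine ⟨convex_univ, ?_⟩
  intro x _ y _ a b ha hb hab
  rcases eq_or_lt_of_le ha with ha0 | ha0
  · have hb1 : b = 1 := by linarith
    rw [← ha0, hb1]
    simp
  rcases eq_or_lt_of_le hb with hb0 | hb0
  · have ha1 : a = 1 := by linarith
    rw [← hb0, ha1]
    simp
  have hb1 : b < 1 := by linarith
  have ha' : a = 1 - b := by linarith
  subst ha'
  set e : V := y - x with he
  set φ : ℝ → ℝ := fun τ => g (x + τ • e) with hφ
  have hlocφ : LocLip φ := hlocg.comp_line x e
  have h2φ : ∀ s t : ℝ, clarkeDeriv φ s (t - s) + clarkeDeriv φ t (s - t) ≤ 0 := by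
    intro s t
    have c1 := clarkeDeriv_comp_line hlocg x e s (t - s)
    have c2 := clarkeDeriv_comp_line hlocg x e t (s - t)
    have hpt : (x + t • e) - (x + s • e) = (t - s) • e := by
      rw [sub_smul]; abel
    have hpt2 : (x + s • e) - (x + t • e) = (s - t) • e := by
      rw [sub_smul]; abel
    have := h2g (x + s • e) (x + t • e)
    rw [hpt, hpt2] at this
    calc clarkeDeriv φ s (t - s) + clarkeDeriv φ t (s - t)
        ≤ clarkeDeriv g (x + s • e) ((t - s) • e) + clarkeDeriv g (x + t • e) ((s - t) • e) := by
          exact add_le_add c1 c2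
    _ ≤ 0 := this
  have hkey := convex_of_clarke_mono φ hlocφ h2φ hb0 hb1
  have hφb : φ b = g ((1 - b) • x + b • y) := by
    rw [hφ, he]
    show g (x + b • (y - x)) = g ((1 - b) • x + b • y)
    congr 1
    rw [smul_sub, sub_smul, one_smul]
    abel
  have hφ0 : φ 0 = g x := by rw [hφ]; simp
  have hφ1 : φ 1 = g y := by
    rw [hφ, he]
    show g (x + (1:ℝ) • (y - x)) = g y
    congr 1
    rw [one_smul]
    abel
  rw [hφb, hφ0, hφ1] at hkey
  simpa using hkey

end InnerSpace


/-! ### Elliptic variational inequalities of the second kind -/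

section VI

open RealInnerProductSpace

variable {V : Type*} [NormedAddCommGroup V] [InnerProductSpace ℝ V] [CompleteSpace V]

lemma convex_lower_bound (φ : V → ℝ) (hcv : ConvexOn ℝ univ φ) (hcont : Continuous φ) :
    ∃ d : ℝ, 0 < d ∧ ∀ v : V, φ 0 - 1 - d * ‖v‖ ≤ φ v := by
  obtain ⟨δ, hδ, hsmall⟩ := Metric.continuousAt_iff.1 hcont.continuousAt (ε := 1) one_pos
  set δ' := δ / 2 with hδ'
  have hδ'0 : 0 < δ' := by rw [hδ']; linarith
  have hup : ∀ v : V, ‖v‖ ≤ δ' → φ v ≤ φ 0 + 1 := by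
    intro v hv
    have : dist v 0 < δ := by
      rw [dist_zero_right]
      rw [hδ'] at hv
      linarith
    have := hsmall this
    rw [Real.dist_eq] at this
    have := (abs_lt.1 this).2
    linarith
  have hlow : ∀ v : V, ‖v‖ ≤ δ' → φ 0 - 1 ≤ φ v := by
    intro v hv
    have hmid : φ ((1/2 : ℝ) • v + (1/2 : ℝ) • (-v)) ≤ (1/2) * φ v + (1/2) * φ (-v) :=
      hcv.2 (mem_univ v) (mem_univ (-v)) (by norm_num) (by norm_num) (by norm_num)
    have hz : (1/2 : ℝ) • v + (1/2 : ℝ) • (-v) = 0 := by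
      rw [smul_neg]
      abel
    rw [hz] at hmid
    have hnegv := hup (-v) (by rwa [norm_neg])
    linarith
  refine ⟨1/δ', by positivity, ?_⟩
  intro v
  by_cases hc : ‖v‖ ≤ δ'
  · have := hlow v hc
    have hn : 0 ≤ (1/δ') * ‖v‖ := by positivity
    linarith
  · push_neg at hc
    set t : ℝ := δ' / ‖v‖ with ht
    have hv0 : 0 < ‖v‖ := lt_trans hδ'0 hc
    have ht0 : 0 < t := by positivity
    have ht1 : t < 1 := by
      rw [ht, div_lt_one hv0]
      exact hc
    have hcomb : φ ((1 - t) • (0:V) + t • v) ≤ (1 - t) * φ 0 + t * φ v :=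
      hcv.2 (mem_univ (0:V)) (mem_univ v) (by linarith) (by linarith) (by ring)
    have hq : (1 - t) • (0:V) + t • v = t • v := by simp
    rw [hq] at hcomb
    have hqn : ‖t • v‖ = δ' := by
      rw [norm_smul, Real.norm_eq_abs, abs_of_pos ht0, ht]
      field_simp
    have hql := hlow (t • v) (le_of_eq hqn)
    have h6 : -1 ≤ t * (φ v - φ 0) := by nlinarith [hql, hcomb]
    have hct : (‖v‖/δ') * t = 1 := by
      rw [ht]
      field_simp
    have h7 : (‖v‖/δ') * (-1) ≤ (‖v‖/δ') * (t * (φ v - φ 0)) :=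
      mul_le_mul_of_nonneg_left h6 (by positivity)
    have h8 : (‖v‖/δ') * (t * (φ v - φ 0)) = φ v - φ 0 := by
      rw [← mul_assoc, hct, one_mul]
    rw [h8] at h7
    have h9 : (1/δ') * ‖v‖ = ‖v‖/δ' := by ring
    rw [h9]
    linarith


lemma exists_vi_point (K : Set V) (hKne : K.Nonempty) (hKcl : IsClosed K) (hKcv : Convex ℝ K)
    (φ : V → ℝ) (hcv : ConvexOn ℝ univ φ) (hcont : Continuous φ)
    {ρ : ℝ} (hρ : 0 < ρ) (w : V) :
    ∃ u ∈ K, ∀ v ∈ K, 0 ≤ ⟪u - w, v - u⟫ + ρ * (φ v - φ u) := by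
  set g : V → ℝ := fun v => 1/2 * ‖v‖^2 - ⟪w, v⟫ + ρ * φ v with hgdef
  have hgcont : Continuous g := by
    apply Continuous.add
    · exact (continuous_const.mul (continuous_norm.pow 2)).sub
        (Continuous.inner continuous_const continuous_id)
    · exact continuous_const.mul hcont
  obtain ⟨d, hd, hlb⟩ := convex_lower_bound φ hcv hcont
  set B : ℝ := ρ * (φ 0 - 1) - (‖w‖ + ρ*d)^2/2 with hB
  have hBlb : ∀ v : V, B ≤ g v := by
    intro v
    have h1 : ⟪w, v⟫ ≤ ‖w‖ * ‖v‖ := real_inner_le_norm w v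
    have h2 : ρ * (φ 0 - 1 - d * ‖v‖) ≤ ρ * φ v :=
      mul_le_mul_of_nonneg_left (hlb v) hρ.le
    show B ≤ 1/2 * ‖v‖^2 - ⟪w, v⟫ + ρ * φ v
    rw [hB]
    nlinarith [sq_nonneg (‖v‖ - (‖w‖ + ρ*d))]
  have hbdd : BddBelow (g '' K) := by
    refine ⟨B, ?_⟩
    rintro y ⟨v, _, rfl⟩
    exact hBlb v
  have hne : (g '' K).Nonempty := hKne.image g
  set d₀ : ℝ := sInf (g '' K) with hd₀
  have hseq : ∀ n : ℕ, ∃ y, y ∈ K ∧ g y < d₀ + 1/(n+1) := by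
    intro n
    have hpos : (0:ℝ) < 1/((n:ℝ)+1) := by positivity
    obtain ⟨gy, hgyS, hlt⟩ := exists_lt_of_csInf_lt hne (lt_add_of_pos_right d₀ hpos)
    obtain ⟨y, hy, rfl⟩ := hgyS
    exact ⟨y, hy, hlt⟩
  choose x hxK hxlt using hseq
  have hmidkey : ∀ p q : V, p ∈ K → q ∈ K → 1/8 * ‖p - q‖^2 ≤ (g p + g q)/2 - d₀ := by
    intro p q hp hq
    have hmidK : (1/2:ℝ) • p + (1/2:ℝ) • q ∈ K :=
      hKcv hp hq (by norm_num) (by norm_num) (by norm_num)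
    have hlow : d₀ ≤ g ((1/2:ℝ) • p + (1/2:ℝ) • q) := csInf_le hbdd ⟨_, hmidK, rfl⟩
    have hpar := parallelogram_law_with_norm ℝ p q
    have hmidn : ‖(1/2:ℝ) • p + (1/2:ℝ) • q‖^2 = (1/4) * ‖p + q‖^2 := by
      rw [← smul_add, norm_smul, Real.norm_eq_abs]
      rw [abs_of_pos (by norm_num : (0:ℝ) < 1/2)]
      ring
    have hmidi : ⟪w, (1/2:ℝ) • p + (1/2:ℝ) • q⟫ = 1/2 * ⟪w, p⟫ + 1/2 * ⟪w, q⟫ := by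
      rw [inner_add_right, real_inner_smul_right, real_inner_smul_right]
    have hmidφ : φ ((1/2:ℝ) • p + (1/2:ℝ) • q) ≤ 1/2 * φ p + 1/2 * φ q :=
      hcv.2 (mem_univ p) (mem_univ q) (by norm_num) (by norm_num) (by norm_num)
    have hφmul : ρ * φ ((1/2:ℝ) • p + (1/2:ℝ) • q) ≤ ρ * (1/2 * φ p + 1/2 * φ q) :=
      mul_le_mul_of_nonneg_left hmidφ hρ.le
    simp only [hgdef] at hlow ⊢
    rw [hmidn, hmidi] at hlow
    have hsq : ‖p + q‖^2 = ‖p+q‖ * ‖p+q‖ := by ring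
    have hsq2 : ‖p - q‖^2 = ‖p-q‖ * ‖p-q‖ := by ring
    have hsq3 : ‖p‖^2 = ‖p‖ * ‖p‖ := by ring
    have hsq4 : ‖q‖^2 = ‖q‖ * ‖q‖ := by ring
    nlinarith [hφmul]
  have hcauchy : CauchySeq x := by
    apply cauchySeq_of_le_tendsto_0 (fun N : ℕ => Real.sqrt (8/((N:ℝ)+1)))
    · intro n m N hn hm
      have h1 := hmidkey (x n) (x m) (hxK n) (hxK m)
      have h2 : g (x n) < d₀ + 1/((N:ℝ)+1) := by
        refine lt_of_lt_of_le (hxlt n) ?_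
        have : 1/((n:ℝ)+1) ≤ 1/((N:ℝ)+1) := by
          apply one_div_le_one_div_of_le (by positivity)
          have : (N:ℝ) ≤ n := Nat.cast_le.2 hn
          linarith
        linarith
      have h3 : g (x m) < d₀ + 1/((N:ℝ)+1) := by
        refine lt_of_lt_of_le (hxlt m) ?_
        have : 1/((m:ℝ)+1) ≤ 1/((N:ℝ)+1) := by
          apply one_div_le_one_div_of_le (by positivity)
          have : (N:ℝ) ≤ m := Nat.cast_le.2 hm
          linarith
        linarith
      have h4 : ‖x n - x m‖^2 ≤ 8/((N:ℝ)+1) := by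
        have h5 : 8/((N:ℝ)+1) = 8 * (1/((N:ℝ)+1)) := by ring
        rw [h5]
        linarith
      rw [dist_eq_norm]
      calc ‖x n - x m‖ = Real.sqrt (‖x n - x m‖^2) := (Real.sqrt_sq (norm_nonneg _)).symm
      _ ≤ Real.sqrt (8/((N:ℝ)+1)) := Real.sqrt_le_sqrt h4
    · have t1 : Tendsto (fun n : ℕ => 8/((n:ℝ)+1)) atTop (𝓝 0) := by
        have := tendsto_one_div_add_atTop_nhds_zero_nat.const_mul (8:ℝ)
        simp only [mul_zero] at this
        convert this using 2 with n
        ring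
      have t2 := (Real.continuous_sqrt.tendsto 0).comp t1
      simpa only [Function.comp_def, Real.sqrt_zero] using t2
  obtain ⟨u, hu⟩ := cauchySeq_tendsto_of_complete hcauchy
  have huK : u ∈ K := hKcl.mem_of_tendsto hu (Eventually.of_forall hxK)
  have hgu : g u ≤ d₀ := by
    have h2 : Tendsto (fun n => g (x n)) atTop (𝓝 (g u)) :=
      (hgcont.continuousAt.tendsto).comp hu
    have h3 : Tendsto (fun n : ℕ => d₀ + 1/((n:ℝ)+1)) atTop (𝓝 (d₀ + 0)) :=
      tendsto_const_nhds.add tendsto_one_div_add_atTop_nhds_zero_nat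
    rw [add_zero] at h3
    exact le_of_tendsto_of_tendsto' h2 h3 (fun n => (hxlt n).le)
  have hmin : ∀ v ∈ K, g u ≤ g v := fun v hv => hgu.trans (csInf_le hbdd ⟨v, hv, rfl⟩)
  refine ⟨u, huK, ?_⟩
  intro v hv
  set Xq : ℝ := ⟪u - w, v - u⟫ + ρ * (φ v - φ u) with hXq
  have hkey : ∀ t : ℝ, 0 < t → t ≤ 1 → 0 ≤ t * Xq + t^2/2 * ‖v - u‖^2 := by
    intro t ht0 ht1
    have hvtK : u + t • (v - u) ∈ K := by
      have h5 : (1-t) • u + t • v ∈ K := hKcv huK hv (by linarith) (by linarith) (by ring)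
      have h6 : (1-t) • u + t • v = u + t • (v - u) := by
        rw [smul_sub, sub_smul, one_smul]
        abel
      rwa [h6] at h5
    have hgle := hmin _ hvtK
    have hn : ‖u + t • (v-u)‖^2 = ‖u‖^2 + 2*(t*⟪u, v-u⟫) + t^2*‖v-u‖^2 := by
      rw [norm_add_sq_real, real_inner_smul_right, norm_smul, Real.norm_eq_abs, mul_pow, sq_abs]
    have hi : ⟪w, u + t • (v-u)⟫ = ⟪w, u⟫ + t * ⟪w, v-u⟫ := by
      rw [inner_add_right, real_inner_smul_right]
    have hφt : φ (u + t • (v-u)) ≤ (1-t) * φ u + t * φ v := by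
      have h5 : φ ((1-t) • u + t • v) ≤ (1-t) * φ u + t * φ v :=
        hcv.2 (mem_univ u) (mem_univ v) (by linarith) (by linarith) (by ring)
      have h6 : (1-t) • u + t • v = u + t • (v - u) := by
        rw [smul_sub, sub_smul, one_smul]
        abel
      rwa [h6] at h5
    have hφt2 : ρ * φ (u + t • (v-u)) ≤ ρ * ((1-t) * φ u + t * φ v) :=
      mul_le_mul_of_nonneg_left hφt hρ.le
    have hXexp : ⟪u - w, v - u⟫ = ⟪u, v - u⟫ - ⟪w, v - u⟫ := inner_sub_left u w (v - u)
    have hgle' : 1/2 * ‖u‖^2 - ⟪w, u⟫ + ρ * φ u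
        ≤ 1/2 * ‖u + t • (v-u)‖^2 - ⟪w, u + t • (v-u)⟫ + ρ * φ (u + t • (v-u)) := hgle
    rw [hn, hi] at hgle'
    rw [hXq, hXexp]
    nlinarith [hφt2, hgle']
  by_contra hX
  push_neg at hX
  rcases eq_or_lt_of_le (norm_nonneg (v - u)) with hd0 | hd0
  · have hveq : v - u = 0 := norm_eq_zero.1 hd0.symm
    have : Xq = 0 := by
      rw [hXq, hveq, inner_zero_right]
      have hvu : v = u := by
        have := sub_eq_zero.1 hveq
        exact this
      rw [hvu]
      ring
    rw [this] at hX
    exact absurd hX (lt_irrefl 0)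
  · set t : ℝ := min 1 ((-Xq)/‖v-u‖^2) with htdef
    have hnX : 0 < -Xq := by linarith
    have ht0 : 0 < t := lt_min one_pos (by positivity)
    have ht1 : t ≤ 1 := min_le_left _ _
    have hk := hkey t ht0 ht1
    have htle : t ≤ (-Xq)/‖v-u‖^2 := min_le_right _ _
    have hsq : t^2/2 * ‖v-u‖^2 ≤ t * (-Xq)/2 := by
      have h7 : t * t * ‖v-u‖^2 ≤ t * ((-Xq)/‖v-u‖^2) * ‖v-u‖^2 := by
        have := mul_le_mul_of_nonneg_left htle ht0.le
        nlinarith [sq_nonneg (‖v-u‖)]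
      have h8 : t * ((-Xq)/‖v-u‖^2) * ‖v-u‖^2 = t * (-Xq) := by
        field_simp
      nlinarith
    nlinarith [mul_pos ht0 hnX]


/-- Existence for the elliptic variational inequality of the second kind. -/
theorem vi_exists (K : Set V) (hKne : K.Nonempty) (hKcl : IsClosed K) (hKcv : Convex ℝ K)
    (B : V → (V →L[ℝ] ℝ)) (LB : ℝ) (hLB : 0 < LB)
    (hBLip : ∀ v₁ v₂ : V, ‖B v₁ - B v₂‖ ≤ LB * ‖v₁ - v₂‖)
    (mB : ℝ) (hmB : 0 < mB)
    (hBmon : ∀ v₁ v₂ : V, (B v₁ - B v₂) (v₁ - v₂) ≥ mB * ‖v₁ - v₂‖ ^ 2)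
    (φ : V → ℝ) (hcv : ConvexOn ℝ univ φ) (hcont : Continuous φ) (f : V →L[ℝ] ℝ) :
    ∃ u ∈ K, ∀ v ∈ K, (B u) (v - u) + φ v - φ u ≥ f (v - u) := by
  haveI : Nonempty V := ⟨0⟩
  set ρ : ℝ := mB / LB^2 with hρdef
  have hρ : 0 < ρ := by positivity
  set R : V → V := fun z => (InnerProductSpace.toDual ℝ V).symm (B z - f) with hR
  set bmap : V → V := fun z => z - ρ • R z with hbmap
  choose S hSK hSvi using fun z : V =>
    exists_vi_point K hKne hKcl hKcv φ hcv hcont hρ (bmap z)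
  -- contraction estimate
  have hRsub : ∀ z₁ z₂ : V, R z₁ - R z₂ = (InnerProductSpace.toDual ℝ V).symm (B z₁ - B z₂) := by
    intro z₁ z₂
    rw [hR]
    simp only []
    rw [← map_sub]
    congr 1
    abel
  have hcontr : ∀ z₁ z₂ : V, ‖S z₁ - S z₂‖ ≤ ‖bmap z₁ - bmap z₂‖ := by
    intro z₁ z₂
    have h1 := hSvi z₁ (S z₂) (hSK z₂)
    have h2 := hSvi z₂ (S z₁) (hSK z₁)
    have hadd : 0 ≤ ⟪S z₁ - bmap z₁, S z₂ - S z₁⟫ + ⟪S z₂ - bmap z₂, S z₁ - S z₂⟫ := by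
      have := add_nonneg h1 h2
      nlinarith [this]
    have hexp : ⟪S z₁ - bmap z₁, S z₂ - S z₁⟫ + ⟪S z₂ - bmap z₂, S z₁ - S z₂⟫
        = -‖S z₁ - S z₂‖^2 + ⟪bmap z₁ - bmap z₂, S z₁ - S z₂⟫ := by
      have e1 : ⟪S z₁ - bmap z₁, S z₂ - S z₁⟫ = ⟪S z₁, S z₂ - S z₁⟫ - ⟪bmap z₁, S z₂ - S z₁⟫ :=
        inner_sub_left _ _ _
      have e2 : ⟪S z₂ - bmap z₂, S z₁ - S z₂⟫ = ⟪S z₂, S z₁ - S z₂⟫ - ⟪bmap z₂, S z₁ - S z₂⟫ :=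
        inner_sub_left _ _ _
      have e3 : ⟪S z₂ - S z₁, S z₁ - S z₂⟫ = -‖S z₁ - S z₂‖^2 := by
        rw [show S z₂ - S z₁ = -(S z₁ - S z₂) by abel, inner_neg_left,
          real_inner_self_eq_norm_sq]
      have e4 : ⟪S z₁, S z₂ - S z₁⟫ + ⟪S z₂, S z₁ - S z₂⟫ = ⟪S z₂ - S z₁, S z₁ - S z₂⟫ := by
        rw [inner_sub_left]
        have : ⟪S z₁, S z₂ - S z₁⟫ = -⟪S z₁, S z₁ - S z₂⟫ := by
          rw [show S z₂ - S z₁ = -(S z₁ - S z₂) by abel, inner_neg_right]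
        rw [this]
        ring
      have e5 : ⟪bmap z₁, S z₂ - S z₁⟫ = -⟪bmap z₁, S z₁ - S z₂⟫ := by
        rw [show S z₂ - S z₁ = -(S z₁ - S z₂) by abel, inner_neg_right]
      have e6 : ⟪bmap z₁ - bmap z₂, S z₁ - S z₂⟫
          = ⟪bmap z₁, S z₁ - S z₂⟫ - ⟪bmap z₂, S z₁ - S z₂⟫ := inner_sub_left _ _ _
      rw [e1, e2, e5, e6]
      rw [← e3, ← e4]
      ring
    rw [hexp] at hadd
    have hcs : ⟪bmap z₁ - bmap z₂, S z₁ - S z₂⟫ ≤ ‖bmap z₁ - bmap z₂‖ * ‖S z₁ - S z₂‖ :=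
      real_inner_le_norm _ _
    rcases eq_or_lt_of_le (norm_nonneg (S z₁ - S z₂)) with h0 | h0
    · rw [← h0]
      exact norm_nonneg _
    · have : ‖S z₁ - S z₂‖ * ‖S z₁ - S z₂‖ ≤ ‖bmap z₁ - bmap z₂‖ * ‖S z₁ - S z₂‖ := by
        nlinarith
      exact le_of_mul_le_mul_right this h0
  set r : ℝ := max (1 - 2*ρ*mB + ρ^2*LB^2) 0 with hrdef
  have hr0 : 0 ≤ r := le_max_right _ _
  have hr1 : r < 1 := by
    rw [hrdef]
    apply max_lt _ one_pos
    have : ρ^2 * LB^2 = ρ * mB := by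
      rw [hρdef]
      field_simp
    rw [this]
    have : 0 < ρ * mB := mul_pos hρ hmB
    linarith
  have hbcontr : ∀ z₁ z₂ : V, ‖bmap z₁ - bmap z₂‖ ≤ Real.sqrt r * ‖z₁ - z₂‖ := by
    intro z₁ z₂
    have hsq : ‖bmap z₁ - bmap z₂‖^2 ≤ r * ‖z₁ - z₂‖^2 := by
      have hbe : bmap z₁ - bmap z₂ = (z₁ - z₂) - ρ • (R z₁ - R z₂) := by
        rw [hbmap]
        simp only []
        rw [smul_sub]
        abel
      rw [hbe, norm_sub_sq_real]
      have hin : ⟪z₁ - z₂, ρ • (R z₁ - R z₂)⟫ = ρ * ((B z₁ - B z₂) (z₁ - z₂)) := by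
        rw [real_inner_smul_right, hRsub, real_inner_comm,
          InnerProductSpace.toDual_symm_apply]
      have hnR : ‖ρ • (R z₁ - R z₂)‖ = ρ * ‖B z₁ - B z₂‖ := by
        rw [norm_smul, Real.norm_eq_abs, abs_of_pos hρ, hRsub,
          LinearIsometryEquiv.norm_map]
      rw [hin, hnR]
      have hm := hBmon z₁ z₂
      have hl := hBLip z₁ z₂
      have hnn : (0:ℝ) ≤ ‖B z₁ - B z₂‖ := norm_nonneg _
      have hrr : 1 - 2*ρ*mB + ρ^2*LB^2 ≤ r := le_max_left _ _
      nlinarith [sq_nonneg (‖z₁ - z₂‖), mul_le_mul hl hl hnn (by positivity : (0:ℝ) ≤ LB * ‖z₁ - z₂‖)]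
    have h7 : ‖bmap z₁ - bmap z₂‖^2 ≤ (Real.sqrt r * ‖z₁ - z₂‖)^2 := by
      rw [mul_pow, Real.sq_sqrt hr0]
      exact hsq
    calc ‖bmap z₁ - bmap z₂‖ = Real.sqrt (‖bmap z₁ - bmap z₂‖^2) :=
        (Real.sqrt_sq (norm_nonneg _)).symm
    _ ≤ Real.sqrt ((Real.sqrt r * ‖z₁ - z₂‖)^2) := Real.sqrt_le_sqrt h7
    _ = Real.sqrt r * ‖z₁ - z₂‖ := Real.sqrt_sq (by positivity)
  set kc : NNReal := ⟨Real.sqrt r, Real.sqrt_nonneg r⟩ with hkc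
  have hCW : ContractingWith kc S := by
    constructor
    · show (⟨Real.sqrt r, Real.sqrt_nonneg r⟩ : NNReal) < 1
      apply NNReal.coe_lt_coe.1
      show Real.sqrt r < 1
      rw [show (1:ℝ) = Real.sqrt 1 by rw [Real.sqrt_one]]
      exact Real.sqrt_lt_sqrt hr0 hr1
    · apply LipschitzWith.of_dist_le_mul
      intro z₁ z₂
      rw [dist_eq_norm, dist_eq_norm]
      exact (hcontr z₁ z₂).trans (hbcontr z₁ z₂)
  set u : V := ContractingWith.fixedPoint S hCW with hu
  have hfix : S u = u := hCW.fixedPoint_isFixedPt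
  have huK : u ∈ K := by
    rw [← hfix]
    exact hSK u
  refine ⟨u, huK, ?_⟩
  intro v hv
  have hvi := hSvi u v hv
  rw [hfix] at hvi
  have hub : u - bmap u = ρ • R u := by
    rw [hbmap]
    simp only []
    abel
  rw [hub] at hvi
  have hin2 : ⟪ρ • R u, v - u⟫ = ρ * ((B u - f) (v - u)) := by
    rw [real_inner_smul_left, hR]
    simp only []
    rw [InnerProductSpace.toDual_symm_apply]
  rw [hin2] at hvi
  have hsum : 0 ≤ ρ * ((B u - f) (v - u) + (φ v - φ u)) := by
    have : ρ * ((B u - f) (v - u)) + ρ * (φ v - φ u)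
        = ρ * ((B u - f) (v - u) + (φ v - φ u)) := by ring
    linarith [hvi]
  have hE : 0 ≤ (B u - f) (v - u) + (φ v - φ u) := by
    by_contra h
    push_neg at h
    nlinarith [mul_pos hρ (neg_pos.2 h)]
  rw [ContinuousLinearMap.sub_apply] at hE
  linarith

end VI

end VHIaux

open VHIaux RealInnerProductSpace in
theorem stmt9 {V : Type*} [NormedAddCommGroup V] [InnerProductSpace ℝ V] [CompleteSpace V]
    (K : Set V) (hKne : K.Nonempty) (hKcl : IsClosed K) (hKcv : Convex ℝ K)
    (A : V → (V →L[ℝ] ℝ)) (LA : ℝ) (hLA : 0 < LA)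
    (hALip : ∀ v₁ v₂ : V, ‖A v₁ - A v₂‖ ≤ LA * ‖v₁ - v₂‖)
    (mA : ℝ) (hmA : 0 < mA)
    (hAmon : ∀ v₁ v₂ : V, (A v₁ - A v₂) (v₁ - v₂) ≥ mA * ‖v₁ - v₂‖ ^ 2)
    (Φ : V → ℝ) (hΦcv : ConvexOn ℝ Set.univ Φ) (hΦcont : Continuous Φ)
    (Ψ : V → ℝ)
    (hΨlip : ∀ u : V, ∃ (L : NNReal) (s : Set V), s ∈ 𝓝 u ∧ LipschitzOnWith L Ψ s)
    (αΨ : ℝ) (hαΨ : 0 ≤ αΨ)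
    (hΨmon : ∀ v₁ v₂ : V,
      clarkeDeriv Ψ v₁ (v₂ - v₁) + clarkeDeriv Ψ v₂ (v₁ - v₂) ≤ αΨ * ‖v₁ - v₂‖ ^ 2)
    (f : V →L[ℝ] ℝ) (hsmall : αΨ < mA) :
    ∃! u : V, u ∈ K ∧ ∀ v ∈ K,
      (A u) (v - u) + Φ v - Φ u + clarkeDeriv Ψ u (v - u) ≥ f (v - u) := by
  classical
  have hΨloc : LocLip Ψ := hΨlip
  set Ψt : V → ℝ := fun x => Ψ x + αΨ/2 * ‖x‖^2 with hΨtdef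
  have hΨtloc : LocLip Ψt := hΨloc.add (locLip_norm_sq αΨ)
  have hΨtcv : ConvexOn ℝ Set.univ Ψt := tilde_convexOn Ψ hΨloc αΨ hΨmon
  set φt : V → ℝ := fun x => Φ x + Ψt x with hφtdef
  have hφtcv : ConvexOn ℝ Set.univ φt := hΦcv.add hΨtcv
  have hφtcont : Continuous φt :=
    hΦcont.add (hΨloc.continuous.add (continuous_const.mul (continuous_norm.pow 2)))
  set Bop : V → (V →L[ℝ] ℝ) := fun v => A v - αΨ • (innerSL ℝ v) with hBop
  have hBLip : ∀ v₁ v₂ : V, ‖Bop v₁ - Bop v₂‖ ≤ (LA + αΨ) * ‖v₁ - v₂‖ := by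
    intro v₁ v₂
    have h1 : Bop v₁ - Bop v₂ = (A v₁ - A v₂) - αΨ • (innerSL ℝ (v₁ - v₂)) := by
      rw [hBop]
      simp only []
      rw [map_sub, smul_sub]
      abel
    rw [h1]
    calc ‖(A v₁ - A v₂) - αΨ • (innerSL ℝ (v₁ - v₂))‖
        ≤ ‖A v₁ - A v₂‖ + ‖αΨ • (innerSL ℝ (v₁ - v₂))‖ := norm_sub_le _ _
    _ ≤ LA * ‖v₁ - v₂‖ + αΨ * ‖v₁ - v₂‖ := by
        have h2 : ‖αΨ • (innerSL ℝ (v₁ - v₂))‖ ≤ αΨ * ‖v₁ - v₂‖ := by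
          have h3 := ContinuousLinearMap.opNorm_smul_le αΨ (innerSL ℝ (v₁ - v₂))
          rwa [Real.norm_eq_abs, abs_of_nonneg hαΨ, innerSL_apply_norm] at h3
        exact add_le_add (hALip v₁ v₂) h2
    _ = (LA + αΨ) * ‖v₁ - v₂‖ := by ring
  have hBmon : ∀ v₁ v₂ : V, (Bop v₁ - Bop v₂) (v₁ - v₂) ≥ (mA - αΨ) * ‖v₁ - v₂‖ ^ 2 := by
    intro v₁ v₂
    have h1 : Bop v₁ - Bop v₂ = (A v₁ - A v₂) - αΨ • (innerSL ℝ (v₁ - v₂)) := by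
      rw [hBop]
      simp only []
      rw [map_sub, smul_sub]
      abel
    rw [h1, ContinuousLinearMap.sub_apply, ContinuousLinearMap.smul_apply, innerSL_apply_apply,
      real_inner_self_eq_norm_sq]
    have := hAmon v₁ v₂
    have h2 : αΨ * ‖v₁ - v₂‖^2 ≤ αΨ * ‖v₁ - v₂‖^2 := le_refl _
    simp only [smul_eq_mul]
    nlinarith
  obtain ⟨u, huK, huvi⟩ := vi_exists K hKne hKcl hKcv Bop (LA + αΨ) (by linarith)
    hBLip (mA - αΨ) (by linarith) hBmon φt hφtcv hφtcont f
  have horig : ∀ v ∈ K, (A u) (v - u) + Φ v - Φ u + clarkeDeriv Ψ u (v - u) ≥ f (v - u) := by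
    intro v hv
    set c : ℝ := (A u) (v - u) - αΨ * ⟪u, v - u⟫ + Φ v - Φ u - f (v - u) with hc
    have hquot : ∀ t : ℝ, 0 < t → t ≤ 1 → -c ≤ (Ψt (u + t • (v - u)) - Ψt u) / t := by
      intro t ht0 ht1
      have hvtK : u + t • (v - u) ∈ K := by
        have h5 : (1 - t) • u + t • v ∈ K := hKcv huK hv (by linarith) (by linarith) (by ring)
        have h6 : (1 - t) • u + t • v = u + t • (v - u) := by
          rw [smul_sub, sub_smul, one_smul]
          abel
        rwa [h6] at h5
      have h9 := huvi _ hvtK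
      have hsub : u + t • (v - u) - u = t • (v - u) := by abel
      rw [hsub] at h9
      have hBap : (Bop u) (t • (v - u)) = t * ((A u) (v - u) - αΨ * ⟪u, v - u⟫) := by
        rw [hBop]
        simp only []
        rw [map_smul, ContinuousLinearMap.sub_apply, ContinuousLinearMap.smul_apply,
          innerSL_apply_apply]
        simp only [smul_eq_mul]
      have hfap : f (t • (v - u)) = t * f (v - u) := by
        rw [map_smul]
        simp only [smul_eq_mul]
      have hΦvt : Φ (u + t • (v - u)) - Φ u ≤ t * (Φ v - Φ u) := by
        have h5 : Φ ((1 - t) • u + t • v) ≤ (1 - t) * Φ u + t * Φ v :=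
          hΦcv.2 (Set.mem_univ u) (Set.mem_univ v) (by linarith) (by linarith) (by ring)
        have h6 : (1 - t) • u + t • v = u + t • (v - u) := by
          rw [smul_sub, sub_smul, one_smul]
          abel
        rw [h6] at h5
        linarith
      rw [hBap, hfap] at h9
      rw [le_div_iff₀ ht0]
      have h11 := h9
      simp only [hφtdef] at h11
      rw [hc]
      nlinarith [h11, hΦvt]
    obtain ⟨C, hC0, hbd⟩ := hΨtloc.event_bound u (v - u)
    have hclarke : -c ≤ clarkeDeriv Ψt u (v - u) := by
      apply le_clarkeDeriv_of_quot hbd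
      have hlt1 : ∀ᶠ t in 𝓝[>] (0:ℝ), t < 1 :=
        (eventually_lt_nhds one_pos).filter_mono nhdsWithin_le_nhds
      filter_upwards [hlt1, eventually_mem_nhdsWithin] with t h1 h2
      exact hquot t h2 h1.le
    have hDt : clarkeDeriv Ψt u (v - u) = clarkeDeriv Ψ u (v - u) + αΨ * ⟪u, v - u⟫ :=
      clarkeDeriv_add_sq Ψ hΨloc αΨ u (v - u)
    rw [hDt] at hclarke
    rw [hc] at hclarke
    linarith
  refine ⟨u, ⟨huK, horig⟩, ?_⟩
  rintro y ⟨hyK, hyvi⟩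
  have h1 := hyvi u huK
  have h2 := horig y hyK
  have hmono := hAmon y u
  have hmon2 := hΨmon y u
  have hf0 : f (u - y) + f (y - u) = 0 := by
    rw [← map_add]
    have : (u - y) + (y - u) = 0 := by abel
    rw [this, map_zero]
  have hA0 : (A y) (u - y) + (A u) (y - u) = -((A y - A u) (y - u)) := by
    rw [ContinuousLinearMap.sub_apply]
    have : (A y) (u - y) = -((A y) (y - u)) := by
      rw [← map_neg]
      congr 1
      abel
    rw [this]
    ring
  have hnormsym : ‖y - u‖ = ‖u - y‖ := by
    rw [show y - u = -(u - y) by abel, norm_neg]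
  have hsq : (mA - αΨ) * ‖y - u‖^2 ≤ 0 := by nlinarith [h1, h2, hmono, hmon2]
  have hz : ‖y - u‖^2 ≤ 0 := by
    by_contra hzz
    push_neg at hzz
    nlinarith
  have : ‖y - u‖ = 0 := by nlinarith [sq_nonneg (‖y - u‖), norm_nonneg (y - u)]
  have : y - u = 0 := norm_eq_zero.1 this
  exact sub_eq_zero.1 this
end

section
/- Assume the abstract VHI data hypotheses with α_Ψ < m_A. Let f₁, f₂ ∈ V* and let u₁, u₂ ∈ K satisfy, for i = 1, 2, the inequality ⟨Au_i, v − u_i⟩ + Φ(v) − Φ(u_i) + Ψ⁰(u_i; v − u_i) ≥ ⟨f_i, v − u_i⟩ for all v ∈ K. Then ‖u₁ − u₂‖_V ≤ (m_A − α_Ψ)⁻¹ ‖f₁ − f₂‖_{V*}; in particular, the solution depends Lipschitz continuously on f. -/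
open Filter Topology

theorem stmt10 {V : Type*} [NormedAddCommGroup V] [InnerProductSpace ℝ V] [CompleteSpace V]
    (K : Set V) (hKne : K.Nonempty) (hKcl : IsClosed K) (hKcv : Convex ℝ K)
    (A : V → (V →L[ℝ] ℝ)) (LA : ℝ) (hLA : 0 < LA)
    (hALip : ∀ v₁ v₂ : V, ‖A v₁ - A v₂‖ ≤ LA * ‖v₁ - v₂‖)
    (mA : ℝ) (hmA : 0 < mA)
    (hAmon : ∀ v₁ v₂ : V, (A v₁ - A v₂) (v₁ - v₂) ≥ mA * ‖v₁ - v₂‖ ^ 2)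
    (Φ : V → ℝ) (hΦcv : ConvexOn ℝ Set.univ Φ) (hΦcont : Continuous Φ)
    (Ψ : V → ℝ)
    (hΨlip : ∀ u : V, ∃ (L : NNReal) (s : Set V), s ∈ 𝓝 u ∧ LipschitzOnWith L Ψ s)
    (αΨ : ℝ) (hαΨ : 0 ≤ αΨ)
    (hΨmon : ∀ v₁ v₂ : V,
      clarkeDeriv Ψ v₁ (v₂ - v₁) + clarkeDeriv Ψ v₂ (v₁ - v₂) ≤ αΨ * ‖v₁ - v₂‖ ^ 2)
    (hsmall : αΨ < mA)
    (f₁ f₂ : V →L[ℝ] ℝ) (u₁ u₂ : V) (hu₁K : u₁ ∈ K) (hu₂K : u₂ ∈ K)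
    (hu₁ : ∀ v ∈ K,
      (A u₁) (v - u₁) + Φ v - Φ u₁ + clarkeDeriv Ψ u₁ (v - u₁) ≥ f₁ (v - u₁))
    (hu₂ : ∀ v ∈ K,
      (A u₂) (v - u₂) + Φ v - Φ u₂ + clarkeDeriv Ψ u₂ (v - u₂) ≥ f₂ (v - u₂)) :
    ‖u₁ - u₂‖ ≤ (mA - αΨ)⁻¹ * ‖f₁ - f₂‖ := by

  have h1 := hu₁ u₂ hu₂K
  have h2 := hu₂ u₁ hu₁K
  have hmon := hΨmon u₁ u₂
  have hA := hAmon u₁ u₂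
  set d := u₁ - u₂ with hd
  have hkey : (mA - αΨ) * ‖d‖ ^ 2 ≤ ‖f₁ - f₂‖ * ‖d‖ := by
    have hfd : (f₁ - f₂) d ≤ ‖f₁ - f₂‖ * ‖d‖ := by
      calc (f₁ - f₂) d ≤ |(f₁ - f₂) d| := le_abs_self _
        _ = ‖(f₁ - f₂) d‖ := rfl
        _ ≤ ‖f₁ - f₂‖ * ‖d‖ := (f₁ - f₂).le_opNorm d
    have hAd : (A u₁ - A u₂) d ≥ mA * ‖d‖ ^ 2 := hA
    have hsum : (A u₁) (u₂ - u₁) + (A u₂) (u₁ - u₂)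
        + (clarkeDeriv Ψ u₁ (u₂ - u₁) + clarkeDeriv Ψ u₂ (u₁ - u₂))
        ≥ f₁ (u₂ - u₁) + f₂ (u₁ - u₂) := by linarith
    have e1 : (A u₁) (u₂ - u₁) + (A u₂) (u₁ - u₂) = -((A u₁ - A u₂) d) := by
      simp [hd, map_sub]; ring
    have e2 : f₁ (u₂ - u₁) + f₂ (u₁ - u₂) = -((f₁ - f₂) d) := by
      simp [hd, map_sub]; ring
    rw [e1, e2] at hsum
    have : ‖u₁ - u₂‖ = ‖d‖ := rfl
    rw [this] at hmon
    linarith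
  have hms : 0 < mA - αΨ := by linarith
  rcases eq_or_lt_of_le (norm_nonneg d) with h0 | h0
  · rw [← h0]
    positivity
  · rw [le_inv_mul_iff₀ hms]
    nlinarith [hkey]
end
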